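/- arXiv:1809.09461 — 4 statements merged into one kernel-verified Lean document; each statement's English description precedes it below -/
import Mathlib

section
/- Let $M_n = \langle x_n, v_{n-3},\dots,v_0 \rangle \leq W_n$ (for $n \geq 3$) where $v_i = x_{i+2}^2$, let $V_n = \langle v_{n-3},\dots,v_0\rangle$ and $N_n = V_n^{M_n}$ be the normal closure of $V_n$ in $M_n$. Then $M_n/N_n \cong \mathbb{Z}/4\mathbb{Z}$. -/
/-- Leaves of the complete binary rooted tree of height `n`, recorded as the
big-endian bit string of the (0-indexed) leaf label. -/
abbrev Leaf (n : ℕ) := Fin n → Bool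

/-- The function underlying the standard generator `a k` of `Aut(T_n)`:
it flips coordinate `n - k` of a leaf lying on the leftmost spine above level `n - k`
(this is the permutation `(1, 2^(k-1)+1)(2, 2^(k-1)+2) ⋯ (2^(k-1), 2^k)` of the leaves). -/
def aFun (n k : ℕ) (ℓ : Leaf n) : Leaf n := fun t =>
  if (t : ℕ) = n - k ∧ (∀ s : Fin n, (s : ℕ) < n - k → ℓ s = false) then !(ℓ t) else ℓ t

lemma aFun_apply (n k : ℕ) (ℓ : Leaf n) (t : Fin n) :
    aFun n k ℓ t =
      if (t : ℕ) = n - k ∧ (∀ s : Fin n, (s : ℕ) < n - k → ℓ s = false) then !(ℓ t) else ℓ t :=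
  rfl

lemma aFun_spine (n k : ℕ) (ℓ : Leaf n) (s : Fin n) (hs : (s : ℕ) < n - k) :
    aFun n k ℓ s = ℓ s := by
  rw [aFun_apply, if_neg]
  rintro ⟨h1, -⟩
  omega

lemma aFun_cond (n k : ℕ) (ℓ : Leaf n) (t : Fin n) :
    ((t : ℕ) = n - k ∧ (∀ s : Fin n, (s : ℕ) < n - k → aFun n k ℓ s = false)) ↔
    ((t : ℕ) = n - k ∧ (∀ s : Fin n, (s : ℕ) < n - k → ℓ s = false)) := by
  constructor
  · rintro ⟨h1, h2⟩
    refine ⟨h1, fun s hs => ?_⟩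
    have h := h2 s hs
    rwa [aFun_spine n k ℓ s hs] at h
  · rintro ⟨h1, h2⟩
    refine ⟨h1, fun s hs => ?_⟩
    rw [aFun_spine n k ℓ s hs]
    exact h2 s hs

lemma aFun_involutive (n k : ℕ) : Function.Involutive (aFun n k) := by
  intro ℓ
  funext t
  rw [show aFun n k (aFun n k ℓ) t =
    (if (t : ℕ) = n - k ∧ (∀ s : Fin n, (s : ℕ) < n - k → aFun n k ℓ s = false)
      then !(aFun n k ℓ t) else aFun n k ℓ t) from rfl]
  by_cases h : (t : ℕ) = n - k ∧ (∀ s : Fin n, (s : ℕ) < n - k → ℓ s = false)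
  · rw [if_pos ((aFun_cond n k ℓ t).mpr h), aFun_apply, if_pos h, Bool.not_not]
  · rw [if_neg (fun hc => h ((aFun_cond n k ℓ t).mp hc)), aFun_apply, if_neg h]

/-- The standard generator `a_k` of `Aut(T_n)` (as a permutation of the leaves). -/
def aPerm (n k : ℕ) : Equiv.Perm (Leaf n) :=
  Function.Involutive.toPerm (aFun n k) (aFun_involutive n k)

lemma aPerm_apply (n k : ℕ) (ℓ : Leaf n) : aPerm n k ℓ = aFun n k ℓ := rfl

/-- The automorphism group `W_n` of the complete binary rooted tree of height `n`,
realized as the subgroup of permutations of the `2^n` leaves which, at every level `m`,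
map leaves agreeing in their first `m` coordinates to leaves agreeing in their first
`m` coordinates. -/
def treeGroup (n : ℕ) : Subgroup (Equiv.Perm (Leaf n)) where
  carrier := {σ | ∀ m : ℕ, ∀ i j : Leaf n,
    (∀ t : Fin n, (t : ℕ) < m → σ i t = σ j t) ↔ (∀ t : Fin n, (t : ℕ) < m → i t = j t)}
  one_mem' := by intro m i j; simp
  mul_mem' := by
    intro a b ha hb m i j
    simpa [Equiv.Perm.mul_apply] using (ha m (b i) (b j)).trans (hb m i j)
  inv_mem' := by
    intro a ha m i j
    simpa using (ha m (a⁻¹ i) (a⁻¹ j)).symm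

lemma mem_treeGroup (n : ℕ) (σ : Equiv.Perm (Leaf n)) :
    σ ∈ treeGroup n ↔ ∀ m : ℕ, ∀ i j : Leaf n,
      (∀ t : Fin n, (t : ℕ) < m → σ i t = σ j t) ↔ (∀ t : Fin n, (t : ℕ) < m → i t = j t) :=
  Iff.rfl

lemma aPerm_mem (n k : ℕ) : aPerm n k ∈ treeGroup n := by
  have D : ∀ (i j : Leaf n) (m : ℕ), (∀ t : Fin n, (t : ℕ) < m → i t = j t) →
      (∀ t : Fin n, (t : ℕ) < m → aFun n k i t = aFun n k j t) := by
    intro i j m hij t ht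
    rw [aFun_apply, aFun_apply]
    by_cases h1 : (t : ℕ) = n - k
    · have hsp : (∀ s : Fin n, (s : ℕ) < n - k → i s = false) ↔
          (∀ s : Fin n, (s : ℕ) < n - k → j s = false) := by
        constructor
        · intro h s hs
          rw [← hij s (by omega)]; exact h s hs
        · intro h s hs
          rw [hij s (by omega)]; exact h s hs
      by_cases h2 : ∀ s : Fin n, (s : ℕ) < n - k → i s = false
      · rw [if_pos ⟨h1, h2⟩, if_pos ⟨h1, hsp.mp h2⟩, hij t ht]
      · rw [if_neg (fun hc => h2 hc.2), if_neg (fun hc => h2 (hsp.mpr hc.2)), hij t ht]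
    · rw [if_neg (fun hc => h1 hc.1), if_neg (fun hc => h1 hc.1), hij t ht]
  rw [mem_treeGroup]
  intro m i j
  constructor
  · intro h t ht
    have h2 := D (aPerm n k i) (aPerm n k j) m (fun t ht => by
      simpa [aPerm_apply] using h t ht) t ht
    rwa [show aFun n k (aPerm n k i) = i from aFun_involutive n k i,
      show aFun n k (aPerm n k j) = j from aFun_involutive n k j] at h2
  · intro h t ht
    simpa [aPerm_apply] using D i j m h t ht

/-- The standard generator `a_k` as an element of `W_n`. -/
def aEl (n k : ℕ) : ↥(treeGroup n) := ⟨aPerm n k, aPerm_mem n k⟩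

/-- The standard `k`-odometer `x_k = a_1 a_2 ⋯ a_k`, viewed inside `W_n`
(via the natural inclusion of `W_k` acting on the left part of the tree). -/
def xEl (n k : ℕ) : ↥(treeGroup n) :=
  (((List.range k).map fun j => aEl n (j + 1))).prod

/-- `v_i = x_{i+2}^2`, viewed inside `W_n`. -/
def vEl (n i : ℕ) : ↥(treeGroup n) := (xEl n (i + 2)) ^ 2

/-- `m_n = a_{n-1} (x_{n-2})^{x_n}` (with `g^h = h g h⁻¹`), viewed inside `W_n`. -/
def mEl (n : ℕ) : ↥(treeGroup n) :=
  aEl n (n - 1) * (xEl n n * xEl n (n - 2) * (xEl n n)⁻¹)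

/-- A permutation of the leaves of `T_n` is an `n`-odometer if it acts transitively on them. -/
def IsOdometer (n : ℕ) (σ : Equiv.Perm (Leaf n)) : Prop :=
  ∀ i j : Leaf n, ∃ t : ℕ, (σ ^ t) i = j

/-- The generating set `{v_i : i ≤ k - 3}` of `V_k`, inside `W_n`. -/
def VsetK (n k : ℕ) : Set ↥(treeGroup n) := {g | ∃ i : ℕ, i + 3 ≤ k ∧ g = vEl n i}

/-- The subgroup `V_k = ⟨v_{k-3}, …, v_0⟩ ≤ W_n`. -/
def VgrpK (n k : ℕ) : Subgroup ↥(treeGroup n) := Subgroup.closure (VsetK n k)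

/-- The group `M_k = ⟨x_k, v_{k-3}, …, v_0⟩` of Section 4, inside `W_n`. -/
def MgrpK (n k : ℕ) : Subgroup ↥(treeGroup n) :=
  Subgroup.closure (insert (xEl n k) (VsetK n k))

/-- The normal closure `N_k = V_k^{M_k}` of `V_k` in `M_k`, inside `W_n`. -/
def NgrpK (n k : ℕ) : Subgroup ↥(treeGroup n) :=
  Subgroup.closure {g | ∃ m ∈ MgrpK n k, ∃ v ∈ VsetK n k, g = m * v * m⁻¹}

/-- The group `M_n = ⟨x_n, m_n, v_{n-3}, …, v_0⟩` of Section 5. -/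
def MgrpB (n : ℕ) : Subgroup ↥(treeGroup n) :=
  Subgroup.closure (insert (xEl n n) (insert (mEl n) (VsetK n n)))

/-- The normal closure `N_n = ⟨m_n, v_{n-3}, …, v_0⟩^{M_n}` of Section 5. -/
def NgrpB (n : ℕ) : Subgroup ↥(treeGroup n) :=
  Subgroup.closure {g | ∃ m ∈ MgrpB n, ∃ h ∈ insert (mEl n) (VsetK n n), g = m * h * m⁻¹}

/-- `U_n = V_n^{⟨x_n⟩}`. -/
def Ugrp (n : ℕ) : Subgroup ↥(treeGroup n) :=
  Subgroup.closure {g | ∃ m ∈ Subgroup.closure {xEl n n}, ∃ v ∈ VsetK n n, g = m * v * m⁻¹}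


namespace OdomAux

/-- Add `2^p` with carry upward: bit `t` flips iff `t ≥ p` and all bits in `[p, t)` are `true`. -/
def succFun (n p : ℕ) (ℓ : Leaf n) : Leaf n := fun t =>
  if p ≤ (t : ℕ) ∧ ∀ s : Fin n, p ≤ (s : ℕ) → (s : ℕ) < (t : ℕ) → ℓ s = true
  then !(ℓ t) else ℓ t

lemma succFun_apply (n p : ℕ) (ℓ : Leaf n) (t : Fin n) :
    succFun n p ℓ t =
      if p ≤ (t : ℕ) ∧ ∀ s : Fin n, p ≤ (s : ℕ) → (s : ℕ) < (t : ℕ) → ℓ s = true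
      then !(ℓ t) else ℓ t := rfl

lemma succFun_lt (n p : ℕ) (ℓ : Leaf n) (t : Fin n) (ht : (t : ℕ) < p) :
    succFun n p ℓ t = ℓ t := by
  rw [succFun_apply, if_neg]; rintro ⟨h1, -⟩; omega

lemma succFun_self (n p : ℕ) (ℓ : Leaf n) (t : Fin n) (ht : (t : ℕ) = p) :
    succFun n p ℓ t = !(ℓ t) := by
  rw [succFun_apply, if_pos]; exact ⟨by omega, fun s h1 h2 => by omega⟩

lemma succFun_succ (n p : ℕ) (ℓ : Leaf n) :
    succFun n p (succFun n p ℓ) = succFun n (p + 1) ℓ := by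
  by_cases hp : p < n
  · set tp : Fin n := ⟨p, hp⟩ with htp
    funext t
    rcases lt_trichotomy (t : ℕ) p with ht | ht | ht
    · rw [succFun_lt n p _ t ht, succFun_lt n p _ t ht, succFun_lt n (p+1) _ t (by omega)]
    · -- t = p
      cases hP : ℓ tp
      · -- ℓ p = false : first flips p to true, second flips back with carry; bit p result false
        rw [succFun_self n p _ t ht, succFun_self n p ℓ t ht,
          succFun_lt n (p+1) ℓ t (by omega), Bool.not_not]
      · rw [succFun_self n p _ t ht, succFun_self n p ℓ t ht,
          succFun_lt n (p+1) ℓ t (by omega), Bool.not_not]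
    · -- t > p
      cases hP : ℓ tp
      · have h1 : ∀ s : Fin n, p < (s : ℕ) → succFun n p ℓ s = ℓ s := by
          intro s hs
          rw [succFun_apply, if_neg]
          rintro ⟨-, h2⟩
          have h3 := h2 tp (by simp [htp]) (by simpa [htp] using hs)
          rw [hP] at h3; exact absurd h3 (by simp)
        have hsz : succFun n p ℓ tp = true := by
          rw [succFun_self n p ℓ tp (by simp [htp]), hP]; rfl
        rw [succFun_apply n p (succFun n p ℓ) t, succFun_apply n (p+1) ℓ t, h1 t ht]
        by_cases hc : ∀ s : Fin n, p + 1 ≤ (s : ℕ) → (s : ℕ) < (t : ℕ) → ℓ s = true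
        · rw [if_pos (show p ≤ (t : ℕ) ∧ ∀ s : Fin n, p ≤ (s : ℕ) → (s : ℕ) < (t : ℕ) →
              succFun n p ℓ s = true from ⟨by omega, ?_⟩),
            if_pos (show p + 1 ≤ (t : ℕ) ∧ ∀ s : Fin n, p + 1 ≤ (s : ℕ) → (s : ℕ) < (t : ℕ) →
              ℓ s = true from ⟨by omega, hc⟩)]
          intro s hs1 hs2
          rcases Nat.eq_or_lt_of_le hs1 with h | h
          · rw [show s = tp from Fin.ext h.symm]; exact hsz
          · rw [h1 s h]; exact hc s h hs2
        · rw [if_neg, if_neg]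
          · rintro ⟨-, h2⟩
            exact hc h2
          · rintro ⟨-, h2⟩
            exact hc fun s hs1 hs2 => by
              rw [← h1 s (by omega)]; exact h2 s (by omega) hs2
      · have hmid : succFun n p ℓ tp = false := by
          rw [succFun_self n p ℓ tp (by simp [htp]), hP]; rfl
        have houter : succFun n p (succFun n p ℓ) t = succFun n p ℓ t := by
          rw [succFun_apply n p (succFun n p ℓ) t, if_neg]
          rintro ⟨-, h2⟩
          have h3 := h2 tp (by simp [htp]) (by simpa [htp] using ht)
          rw [hmid] at h3; exact absurd h3 (by simp)
        rw [houter, succFun_apply n p ℓ t, succFun_apply n (p+1) ℓ t]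
        by_cases hc : ∀ s : Fin n, p + 1 ≤ (s : ℕ) → (s : ℕ) < (t : ℕ) → ℓ s = true
        · rw [if_pos (show p ≤ (t : ℕ) ∧ ∀ s : Fin n, p ≤ (s : ℕ) → (s : ℕ) < (t : ℕ) →
              ℓ s = true from ⟨by omega, ?_⟩),
            if_pos (show p + 1 ≤ (t : ℕ) ∧ ∀ s : Fin n, p + 1 ≤ (s : ℕ) → (s : ℕ) < (t : ℕ) →
              ℓ s = true from ⟨by omega, hc⟩)]
          intro s hs1 hs2
          rcases Nat.eq_or_lt_of_le hs1 with h | h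
          · rw [show s = tp from Fin.ext h.symm]; exact hP
          · exact hc s h hs2
        · rw [if_neg, if_neg]
          · rintro ⟨-, h2⟩; exact hc h2
          · rintro ⟨-, h2⟩
            exact hc fun s hs1 hs2 => h2 s (by omega) hs2
  · -- p ≥ n : everything is the identity
    funext t
    rw [succFun_lt n p _ t (by omega), succFun_lt n p ℓ t (by omega),
      succFun_lt n (p+1) ℓ t (by omega)]

end OdomAux
namespace OdomAux

lemma xEl_succ (n k : ℕ) : xEl n (k + 1) = xEl n k * aEl n (k + 1) := by
  unfold xEl
  rw [List.range_succ, List.map_append, List.prod_append, List.map_singleton,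
    List.prod_singleton]

lemma aEl_apply (n k : ℕ) (ℓ : Leaf n) :
    ((aEl n k : ↥(treeGroup n)) : Equiv.Perm (Leaf n)) ℓ = aFun n k ℓ := rfl

lemma xEl_apply (n : ℕ) : ∀ k, k ≤ n → ∀ ℓ : Leaf n,
    ((xEl n k : ↥(treeGroup n)) : Equiv.Perm (Leaf n)) ℓ =
      if ∀ s : Fin n, (s : ℕ) < n - k → ℓ s = false then succFun n (n - k) ℓ else ℓ := by
  intro k
  induction k with
  | zero =>
    intro _ ℓ
    have h0 : xEl n 0 = 1 := by simp [xEl]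
    rw [h0]
    have h1 : succFun n (n - 0) ℓ = ℓ := by
      funext t; exact succFun_lt n _ ℓ t (by omega)
    rw [h1]
    simp
  | succ k ih =>
    intro hk ℓ
    have hp : n - (k + 1) < n := by omega
    set p : ℕ := n - (k + 1) with hpdef
    have hnk : n - k = p + 1 := by omega
    set tp : Fin n := ⟨p, hp⟩ with htp
    rw [xEl_succ]
    have happ : ((xEl n k * aEl n (k + 1) : ↥(treeGroup n)) : Equiv.Perm (Leaf n)) ℓ =
        ((xEl n k : ↥(treeGroup n)) : Equiv.Perm (Leaf n))
          (((aEl n (k + 1) : ↥(treeGroup n)) : Equiv.Perm (Leaf n)) ℓ) := rfl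
    rw [happ, aEl_apply]
    by_cases hC : ∀ s : Fin n, (s : ℕ) < p → ℓ s = false
    · -- spine condition holds; a_{k+1} flips bit p
      have ha : aFun n (k + 1) ℓ = fun t : Fin n => if (t : ℕ) = p then !(ℓ t) else ℓ t := by
        funext t
        rw [aFun_apply]
        by_cases h : (t : ℕ) = n - (k + 1)
        · rw [if_pos ⟨h, hC⟩, if_pos h]
        · rw [if_neg (fun hcon => h hcon.1), if_neg h]
      rw [ha]
      set ℓ' : Leaf n := fun t : Fin n => if (t : ℕ) = p then !(ℓ t) else ℓ t with hℓ'
      rw [ih (by omega) ℓ', hnk]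
      cases hP : ℓ tp
      · -- ℓ p = false : ℓ' has bit p true, inner x_k does nothing; result is ℓ'
        rw [if_neg, if_pos hC]
        · funext t
          rcases lt_trichotomy (t : ℕ) p with ht | ht | ht
          · rw [succFun_lt n p ℓ t ht, hℓ']
            simp only [if_neg (by omega : ¬ (t : ℕ) = p)]
          · rw [succFun_self n p ℓ t ht, hℓ']
            simp only [if_pos ht]
          · rw [hℓ']
            simp only [if_neg (by omega : ¬ (t : ℕ) = p)]
            rw [succFun_apply, if_neg]
            rintro ⟨-, h2⟩
            have h3 := h2 tp (by simp [htp]) (by simpa [htp] using ht)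
            rw [hP] at h3; exact absurd h3 (by simp)
        · intro hcon
          have h3 := hcon tp (by simp [htp])
          have h4 : ℓ' tp = !(ℓ tp) := by rw [hℓ']; simp [htp]
          rw [h4, hP] at h3
          exact absurd h3 (by simp)
      · -- ℓ p = true : ℓ' has bit p false, x_k acts as succFun (p+1)
        rw [if_pos, if_pos hC]
        · funext t
          rcases lt_trichotomy (t : ℕ) p with ht | ht | ht
          · rw [succFun_lt n (p+1) ℓ' t (by omega), succFun_lt n p ℓ t ht, hℓ']
            simp only [if_neg (by omega : ¬ (t : ℕ) = p)]
          · rw [succFun_lt n (p+1) ℓ' t (by omega), succFun_self n p ℓ t ht, hℓ']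
            simp only [if_pos ht]
          · rw [succFun_apply n (p+1) ℓ' t, succFun_apply n p ℓ t]
            have hval : ℓ' t = ℓ t := by
              rw [hℓ']; simp only [if_neg (by omega : ¬ (t : ℕ) = p)]
            rw [hval]
            by_cases hc : ∀ s : Fin n, p + 1 ≤ (s : ℕ) → (s : ℕ) < (t : ℕ) → ℓ s = true
            · rw [if_pos (show p + 1 ≤ (t : ℕ) ∧ ∀ s : Fin n, p + 1 ≤ (s : ℕ) →
                  (s : ℕ) < (t : ℕ) → ℓ' s = true from ⟨by omega, ?_⟩),
                if_pos (show p ≤ (t : ℕ) ∧ ∀ s : Fin n, p ≤ (s : ℕ) →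
                  (s : ℕ) < (t : ℕ) → ℓ s = true from ⟨by omega, ?_⟩)]
              · intro s hs1 hs2
                rcases Nat.eq_or_lt_of_le hs1 with h | h
                · rw [show s = tp from Fin.ext h.symm]; exact hP
                · exact hc s h hs2
              · intro s hs1 hs2
                rw [hℓ']; simp only [if_neg (by omega : ¬ (s : ℕ) = p)]
                exact hc s hs1 hs2
            · rw [if_neg, if_neg]
              · rintro ⟨-, h2⟩
                exact hc fun s hs1 hs2 => h2 s (by omega) hs2
              · rintro ⟨-, h2⟩
                refine hc fun s hs1 hs2 => ?_
                have h3 := h2 s hs1 hs2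
                rw [hℓ'] at h3
                simpa only [if_neg (by omega : ¬ (s : ℕ) = p)] using h3
        · intro s hs
          rcases Nat.lt_succ_iff_lt_or_eq.mp hs with h | h
          · rw [hℓ']; simp only [if_neg (by omega : ¬ (s : ℕ) = p)]
            exact hC s h
          · have h4 : ℓ' s = !(ℓ s) := by rw [hℓ']; simp [h]
            rw [h4, show s = tp from Fin.ext h, hP]
            rfl
    · -- spine condition fails : everything is the identity
      have ha : aFun n (k + 1) ℓ = ℓ := by
        funext t
        rw [aFun_apply, if_neg]
        rintro ⟨-, h2⟩; exact hC fun s hs => h2 s hs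
      rw [ha, ih (by omega) ℓ, hnk, if_neg, if_neg hC]
      intro hcon
      exact hC fun s hs => hcon s (by omega)

end OdomAux
namespace OdomAux

/-- The label of a leaf modulo 4 (reading coordinate 0 as the least significant bit). -/
def tau (n : ℕ) (ℓ : Leaf n) : ZMod 4 :=
  (if h : 0 < n then (cond (ℓ ⟨0, h⟩) 1 0) else 0) +
  (if h : 1 < n then (cond (ℓ ⟨1, h⟩) 2 0) else 0)

lemma tau_congr (n : ℕ) (ℓ ℓ' : Leaf n)
    (h0 : ∀ h : 0 < n, ℓ' ⟨0, h⟩ = ℓ ⟨0, h⟩) (h1 : ∀ h : 1 < n, ℓ' ⟨1, h⟩ = ℓ ⟨1, h⟩) :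
    tau n ℓ' = tau n ℓ := by
  unfold tau
  by_cases hh0 : 0 < n
  · by_cases hh1 : 1 < n
    · rw [dif_pos hh0, dif_pos hh0, dif_pos hh1, dif_pos hh1, h0 hh0, h1 hh1]
    · rw [dif_pos hh0, dif_pos hh0, dif_neg hh1, dif_neg hh1, h0 hh0]
  · rw [dif_neg hh0, dif_neg hh0, dif_neg (by omega : ¬ 1 < n), dif_neg (by omega : ¬ 1 < n)]

lemma tau_succFun (n p : ℕ) (hp : 2 ≤ p) (ℓ : Leaf n) : tau n (succFun n p ℓ) = tau n ℓ := by
  refine tau_congr n ℓ _ (fun h => succFun_lt n p ℓ ⟨0, h⟩ (by simp; omega))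
    (fun h => succFun_lt n p ℓ ⟨1, h⟩ (by simp; omega))

lemma tau_allFalse (n : ℕ) : tau n (fun _ => false) = 0 := by
  unfold tau
  by_cases hh0 : 0 < n
  · by_cases hh1 : 1 < n
    · rw [dif_pos hh0, dif_pos hh1]; rfl
    · rw [dif_pos hh0, dif_neg hh1]; rfl
  · rw [dif_neg hh0, dif_neg (by omega : ¬ 1 < n)]; rfl

lemma tau_succFun_zero (n : ℕ) (hn : 2 ≤ n) (ℓ : Leaf n) :
    tau n (succFun n 0 ℓ) = tau n ℓ + 1 := by
  have h0 : (0:ℕ) < n := by omega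
  have h1 : (1:ℕ) < n := by omega
  have e0 : succFun n 0 ℓ ⟨0, h0⟩ = !(ℓ ⟨0, h0⟩) := succFun_self n 0 ℓ _ rfl
  have e1 : succFun n 0 ℓ ⟨1, h1⟩ =
      if ℓ ⟨0, h0⟩ = true then !(ℓ ⟨1, h1⟩) else ℓ ⟨1, h1⟩ := by
    rw [succFun_apply]
    by_cases hb : ℓ ⟨0, h0⟩ = true
    · rw [if_pos hb, if_pos]
      refine ⟨by omega, fun s hs1 hs2 => ?_⟩
      have : s = ⟨0, h0⟩ := Fin.ext (by simp at hs2 ⊢; omega)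
      rw [this]; exact hb
    · rw [if_neg hb, if_neg]
      rintro ⟨-, h2⟩
      exact hb (h2 ⟨0, h0⟩ (by omega) (by simp))
  unfold tau
  rw [dif_pos h0, dif_pos h1, dif_pos h0, dif_pos h1, e0, e1]
  cases hb0 : ℓ ⟨0, h0⟩ <;> cases hb1 : ℓ ⟨1, h1⟩ <;> simp <;> decide

lemma xEl_top_apply (n : ℕ) (ℓ : Leaf n) :
    ((xEl n n : ↥(treeGroup n)) : Equiv.Perm (Leaf n)) ℓ = succFun n 0 ℓ := by
  rw [xEl_apply n n le_rfl ℓ, Nat.sub_self, if_pos (fun s hs => absurd hs (by omega))]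

lemma vEl_apply (n i : ℕ) (hi : i + 3 ≤ n) (ℓ : Leaf n) :
    ((vEl n i : ↥(treeGroup n)) : Equiv.Perm (Leaf n)) ℓ =
      if ∀ s : Fin n, (s : ℕ) < n - (i + 2) → ℓ s = false
      then succFun n (n - (i + 2) + 1) ℓ else ℓ := by
  have h2 : ((vEl n i : ↥(treeGroup n)) : Equiv.Perm (Leaf n)) ℓ =
      ((xEl n (i+2) : ↥(treeGroup n)) : Equiv.Perm (Leaf n))
        (((xEl n (i+2) : ↥(treeGroup n)) : Equiv.Perm (Leaf n)) ℓ) := by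
    rw [vEl, pow_two]; rfl
  rw [h2, xEl_apply n (i+2) (by omega) ℓ]
  by_cases hC : ∀ s : Fin n, (s : ℕ) < n - (i + 2) → ℓ s = false
  · rw [if_pos hC, xEl_apply n (i+2) (by omega) _, if_pos, succFun_succ, if_pos hC]
    intro s hs
    rw [succFun_lt n _ ℓ s hs]
    exact hC s hs
  · rw [if_neg hC, xEl_apply n (i+2) (by omega) ℓ, if_neg hC, if_neg hC]

lemma tau_vEl (n i : ℕ) (hi : i + 3 ≤ n) (ℓ : Leaf n) :
    tau n (((vEl n i : ↥(treeGroup n)) : Equiv.Perm (Leaf n)) ℓ) = tau n ℓ := by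
  rw [vEl_apply n i hi ℓ]
  by_cases hC : ∀ s : Fin n, (s : ℕ) < n - (i + 2) → ℓ s = false
  · rw [if_pos hC, tau_succFun n _ (by omega) ℓ]
  · rw [if_neg hC]

end OdomAux
namespace OdomAux

lemma vEl_top_apply (n : ℕ) (hn : 3 ≤ n) (ℓ : Leaf n) :
    ((vEl n (n-3) : ↥(treeGroup n)) : Equiv.Perm (Leaf n)) ℓ =
      if ℓ ⟨0, by omega⟩ = false then succFun n 2 ℓ else ℓ := by
  have h1 : n - (n - 3 + 2) = 1 := by omega
  rw [vEl_apply n (n-3) (by omega) ℓ, h1]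
  by_cases hb : ℓ ⟨0, by omega⟩ = false
  · rw [if_pos hb, if_pos]
    intro s hs
    rw [show s = (⟨0, by omega⟩ : Fin n) from Fin.ext (by simp; omega)]
    exact hb
  · rw [if_neg hb, if_neg]
    intro hcon
    exact hb (hcon ⟨0, by omega⟩ (by simp))

lemma key_identity (n : ℕ) (hn : 3 ≤ n) :
    vEl n (n-3) * xEl n n * vEl n (n-3) = (xEl n n) ^ 5 := by
  have h0 : (0:ℕ) < n := by omega
  apply Subtype.ext
  apply Equiv.ext
  intro ℓ
  have hL : ((((vEl n (n-3) * xEl n n * vEl n (n-3)) : ↥(treeGroup n))) :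
      Equiv.Perm (Leaf n)) ℓ =
      ((vEl n (n-3) : ↥(treeGroup n)) : Equiv.Perm (Leaf n))
        (((xEl n n : ↥(treeGroup n)) : Equiv.Perm (Leaf n))
          (((vEl n (n-3) : ↥(treeGroup n)) : Equiv.Perm (Leaf n)) ℓ)) := rfl
  have hR : ((((xEl n n) ^ 5 : ↥(treeGroup n))) : Equiv.Perm (Leaf n)) ℓ =
      succFun n 0 (succFun n 0 (succFun n 0 (succFun n 0 (succFun n 0 ℓ)))) := by
    have : ((((xEl n n) ^ 5 : ↥(treeGroup n))) : Equiv.Perm (Leaf n)) ℓ =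
        ((xEl n n : ↥(treeGroup n)) : Equiv.Perm (Leaf n))
        (((xEl n n : ↥(treeGroup n)) : Equiv.Perm (Leaf n))
        (((xEl n n : ↥(treeGroup n)) : Equiv.Perm (Leaf n))
        (((xEl n n : ↥(treeGroup n)) : Equiv.Perm (Leaf n))
        (((xEl n n : ↥(treeGroup n)) : Equiv.Perm (Leaf n)) ℓ)))) := by
      rw [show (5:ℕ) = 4 + 1 from rfl, pow_succ, show (4:ℕ) = 3 + 1 from rfl, pow_succ,
        show (3:ℕ) = 2 + 1 from rfl, pow_succ, pow_two]
      rfl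
    rw [this, xEl_top_apply, xEl_top_apply, xEl_top_apply, xEl_top_apply, xEl_top_apply]
  rw [hL, hR]
  cases hb : ℓ ⟨0, h0⟩
  · -- bit 0 false : inner v acts as S 2, then x flips bit 0 to true, outer v trivial
    have e1 : ((vEl n (n-3) : ↥(treeGroup n)) : Equiv.Perm (Leaf n)) ℓ = succFun n 2 ℓ := by
      rw [vEl_top_apply n hn ℓ, if_pos (by simpa only [Fin.mk.injEq] using hb)]
    have e2 : ∀ h : 0 < n, succFun n 0 (succFun n 2 ℓ) ⟨0, h⟩ = true := by
      intro h
      rw [succFun_self n 0 _ _ rfl, succFun_lt n 2 ℓ _ (by simp)]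
      rw [show ℓ ⟨0, h⟩ = ℓ ⟨0, h0⟩ from rfl, hb]
      rfl
    rw [e1, xEl_top_apply, vEl_top_apply n hn _, if_neg (by simp only [e2]; simp)]
    rw [show succFun n 0 (succFun n 0 ℓ) = succFun n 1 ℓ from succFun_succ n 0 ℓ,
      show succFun n 0 (succFun n 0 (succFun n 1 ℓ)) = succFun n 1 (succFun n 1 ℓ)
        from succFun_succ n 0 _,
      show succFun n 1 (succFun n 1 ℓ) = succFun n 2 ℓ from succFun_succ n 1 ℓ]
  · -- bit 0 true : inner v trivial, x makes bit 0 false, outer v acts as S 2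
    have e1 : ((vEl n (n-3) : ↥(treeGroup n)) : Equiv.Perm (Leaf n)) ℓ = ℓ := by
      rw [vEl_top_apply n hn ℓ, if_neg]
      rw [show ℓ ⟨0, by omega⟩ = ℓ ⟨0, h0⟩ from rfl, hb]
      simp
    have e2 : ∀ h : 0 < n, succFun n 0 ℓ ⟨0, h⟩ = false := by
      intro h
      rw [succFun_self n 0 ℓ _ rfl, show ℓ ⟨0, h⟩ = ℓ ⟨0, h0⟩ from rfl, hb]
      rfl
    rw [e1, xEl_top_apply, vEl_top_apply n hn _, if_pos (e2 _)]
    rw [show succFun n 0 (succFun n 0 (succFun n 0 (succFun n 0 (succFun n 0 ℓ)))) =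
        succFun n 1 (succFun n 0 (succFun n 0 (succFun n 0 ℓ))) from succFun_succ n 0 _,
      show succFun n 0 (succFun n 0 (succFun n 0 ℓ)) = succFun n 1 (succFun n 0 ℓ)
        from succFun_succ n 0 _,
      show succFun n 1 (succFun n 1 (succFun n 0 ℓ)) = succFun n 2 (succFun n 0 ℓ)
        from succFun_succ n 1 _]

lemma x_pow_four (n : ℕ) (hn : 3 ≤ n) :
    (xEl n n) ^ 4 = vEl n (n-3) * (xEl n n * vEl n (n-3) * (xEl n n)⁻¹) := by
  have h := key_identity n hn
  have h2 : (xEl n n) ^ 4 = (vEl n (n-3) * xEl n n * vEl n (n-3)) * (xEl n n)⁻¹ := by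
    rw [h]; group
  rw [h2]; group

end OdomAux
namespace OdomAux

/-- The all-`false` (leftmost) leaf. -/
def lf (n : ℕ) : Leaf n := fun _ => false

/-- The label mod 4 of the image of the leftmost leaf. -/
def cInv (n : ℕ) (g : ↥(treeGroup n)) : ZMod 4 :=
  tau n ((g : Equiv.Perm (Leaf n)) (lf n))

lemma tau_lf (n : ℕ) : tau n (lf n) = 0 := tau_allFalse n

lemma hxM (n : ℕ) : xEl n n ∈ MgrpK n n := Subgroup.subset_closure (Set.mem_insert _ _)

lemma vset_mem_M {n : ℕ} {g : ↥(treeGroup n)} (hg : g ∈ VsetK n n) : g ∈ MgrpK n n :=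
  Subgroup.subset_closure (Set.mem_insert_of_mem _ hg)

lemma NleM (n : ℕ) : NgrpK n n ≤ MgrpK n n := by
  rw [NgrpK, Subgroup.closure_le]
  rintro g ⟨m, hm, v, hv, rfl⟩
  exact mul_mem (mul_mem hm (vset_mem_M hv)) (inv_mem hm)

lemma vset_mem_N {n : ℕ} {g : ↥(treeGroup n)} (hg : g ∈ VsetK n n) : g ∈ NgrpK n n :=
  Subgroup.subset_closure ⟨1, one_mem _, g, hg, by group⟩

lemma conjN (n : ℕ) : ∀ m ∈ MgrpK n n, ∀ h ∈ NgrpK n n, m * h * m⁻¹ ∈ NgrpK n n := by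
  intro m hm h hh
  have hh' : h ∈ Subgroup.closure
      {g : ↥(treeGroup n) | ∃ m ∈ MgrpK n n, ∃ v ∈ VsetK n n, g = m * v * m⁻¹} := hh
  refine Subgroup.closure_induction
    (p := fun (h : ↥(treeGroup n)) _ => m * h * m⁻¹ ∈ NgrpK n n) ?_ ?_ ?_ ?_ hh' 
  · rintro g ⟨m', hm', v, hv, rfl⟩
    exact Subgroup.subset_closure ⟨m * m', mul_mem hm hm', v, hv, by group⟩
  · show m * 1 * m⁻¹ ∈ NgrpK n n
    rw [mul_one, mul_inv_cancel]; exact one_mem _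
  · intro a b _ _ ha hb
    have e : m * (a * b) * m⁻¹ = (m * a * m⁻¹) * (m * b * m⁻¹) := by group
    rw [e]; exact mul_mem ha hb
  · intro a _ ha
    have e : m * a⁻¹ * m⁻¹ = (m * a * m⁻¹)⁻¹ := by group
    rw [e]; exact inv_mem ha

lemma tauM {n : ℕ} (hn : 3 ≤ n) : ∀ g ∈ MgrpK n n, ∀ ℓ : Leaf n,
    tau n ((g : Equiv.Perm (Leaf n)) ℓ) = tau n ℓ + cInv n g := by
  intro g hg
  have hg' : g ∈ Subgroup.closure (insert (xEl n n) (VsetK n n)) := hg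
  refine Subgroup.closure_induction
    (p := fun (g : ↥(treeGroup n)) _ => ∀ ℓ : Leaf n,
      tau n ((g : Equiv.Perm (Leaf n)) ℓ) = tau n ℓ + cInv n g) ?_ ?_ ?_ ?_ hg' 
  · intro y hy
    rcases Set.mem_insert_iff.mp hy with rfl | ⟨i, hi, rfl⟩
    · intro ℓ
      have ex : cInv n (xEl n n) = 1 := by
        have e' : cInv n (xEl n n) =
            tau n (((xEl n n : ↥(treeGroup n)) : Equiv.Perm (Leaf n)) (lf n)) := rfl
        rw [e', xEl_top_apply, tau_succFun_zero n (by omega), tau_lf, zero_add]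
      rw [xEl_top_apply, tau_succFun_zero n (by omega) ℓ, ex]
    · intro ℓ
      have ev : cInv n (vEl n i) = 0 := by
        have e' : cInv n (vEl n i) =
            tau n (((vEl n i : ↥(treeGroup n)) : Equiv.Perm (Leaf n)) (lf n)) := rfl
        rw [e', tau_vEl n i hi, tau_lf]
      rw [tau_vEl n i hi ℓ, ev, add_zero]
  · intro ℓ
    have e : ((1 : ↥(treeGroup n)) : Equiv.Perm (Leaf n)) ℓ = ℓ := rfl
    have e2 : cInv n (1 : ↥(treeGroup n)) = 0 := tau_lf n
    rw [e, e2, add_zero]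
  · intro a b _ _ ha hb ℓ
    have e : ((a * b : ↥(treeGroup n)) : Equiv.Perm (Leaf n)) ℓ =
        (a : Equiv.Perm (Leaf n)) ((b : Equiv.Perm (Leaf n)) ℓ) := rfl
    have e2 : cInv n (a * b) = cInv n b + cInv n a := by
      have e' : cInv n (a * b) = tau n ((a : Equiv.Perm (Leaf n))
          ((b : Equiv.Perm (Leaf n)) (lf n))) := rfl
      rw [e', ha]
      rfl
    rw [e, ha, hb, e2]
    ring
  · intro a _ ha ℓ
    have k1 : (a : Equiv.Perm (Leaf n)) (((a⁻¹ : ↥(treeGroup n)) : Equiv.Perm (Leaf n)) ℓ)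
        = ℓ := by simp
    have k2 : (a : Equiv.Perm (Leaf n))
        (((a⁻¹ : ↥(treeGroup n)) : Equiv.Perm (Leaf n)) (lf n)) = lf n := by simp
    have h1 := ha (((a⁻¹ : ↥(treeGroup n)) : Equiv.Perm (Leaf n)) ℓ)
    have h2 := ha (((a⁻¹ : ↥(treeGroup n)) : Equiv.Perm (Leaf n)) (lf n))
    rw [k1] at h1
    rw [k2] at h2
    have e3 : cInv n a⁻¹ = tau n (((a⁻¹ : ↥(treeGroup n)) : Equiv.Perm (Leaf n)) (lf n)) :=
      rfl
    rw [tau_lf] at h2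
    rw [e3]
    linear_combination h2 - h1

lemma tauN {n : ℕ} (hn : 3 ≤ n) : ∀ g ∈ NgrpK n n, ∀ ℓ : Leaf n,
    tau n ((g : Equiv.Perm (Leaf n)) ℓ) = tau n ℓ := by
  intro g hg
  have hg' : g ∈ Subgroup.closure
      {g : ↥(treeGroup n) | ∃ m ∈ MgrpK n n, ∃ v ∈ VsetK n n, g = m * v * m⁻¹} := hg
  refine Subgroup.closure_induction
    (p := fun (g : ↥(treeGroup n)) _ => ∀ ℓ : Leaf n,
      tau n ((g : Equiv.Perm (Leaf n)) ℓ) = tau n ℓ)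
    ?_ ?_ ?_ ?_ hg' 
  · rintro y ⟨m, hm, v, ⟨i, hi, rfl⟩, rfl⟩
    intro ℓ
    set ℓ1 : Leaf n := ((m⁻¹ : ↥(treeGroup n)) : Equiv.Perm (Leaf n)) ℓ with hℓ1
    have e : ((m * vEl n i * m⁻¹ : ↥(treeGroup n)) : Equiv.Perm (Leaf n)) ℓ =
        (m : Equiv.Perm (Leaf n))
          (((vEl n i : ↥(treeGroup n)) : Equiv.Perm (Leaf n)) ℓ1) := rfl
    have h1 := tauM hn m hm (((vEl n i : ↥(treeGroup n)) : Equiv.Perm (Leaf n)) ℓ1)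
    have h2 := tau_vEl n i hi ℓ1
    have h3 := tauM hn m hm ℓ1
    have k1 : (m : Equiv.Perm (Leaf n)) ℓ1 = ℓ := by rw [hℓ1]; simp
    rw [k1] at h3
    rw [e, h1, h2, h3]
  · intro ℓ; rfl
  · intro a b _ _ ha hb ℓ
    have e : ((a * b : ↥(treeGroup n)) : Equiv.Perm (Leaf n)) ℓ =
        (a : Equiv.Perm (Leaf n)) ((b : Equiv.Perm (Leaf n)) ℓ) := rfl
    rw [e, ha, hb]
  · intro a _ ha ℓ
    have k1 : (a : Equiv.Perm (Leaf n)) (((a⁻¹ : ↥(treeGroup n)) : Equiv.Perm (Leaf n)) ℓ)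
        = ℓ := by simp
    have h1 := ha (((a⁻¹ : ↥(treeGroup n)) : Equiv.Perm (Leaf n)) ℓ)
    rw [k1] at h1
    rw [h1]

end OdomAux
namespace OdomAux

lemma x4_mem (n : ℕ) (hn : 3 ≤ n) : (xEl n n) ^ 4 ∈ NgrpK n n := by
  rw [x_pow_four n hn]
  exact mul_mem (vset_mem_N ⟨n - 3, by omega, rfl⟩)
    (Subgroup.subset_closure ⟨xEl n n, hxM n, vEl n (n-3), ⟨n - 3, by omega, rfl⟩, rfl⟩)

lemma decomp (n : ℕ) : ∀ g ∈ MgrpK n n,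
    ∃ k : ℤ, ∃ h, h ∈ NgrpK n n ∧ g = xEl n n ^ k * h := by
  intro g hg
  have hg' : g ∈ Subgroup.closure (insert (xEl n n) (VsetK n n)) := hg
  refine Subgroup.closure_induction
    (p := fun (g : ↥(treeGroup n)) _ =>
      ∃ k : ℤ, ∃ h, h ∈ NgrpK n n ∧ g = xEl n n ^ k * h) ?_ ?_ ?_ ?_ hg'
  · intro y hy
    rcases Set.mem_insert_iff.mp hy with rfl | hv
    · exact ⟨1, 1, one_mem _, by group⟩
    · exact ⟨0, y, vset_mem_N hv, by group⟩
  · exact ⟨0, 1, one_mem _, by group⟩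
  · rintro a b _ _ ⟨k1, h1, hh1, rfl⟩ ⟨k2, h2, hh2, rfl⟩
    refine ⟨k1 + k2, (xEl n n ^ (-k2) * h1 * (xEl n n ^ (-k2))⁻¹) * h2,
      mul_mem (conjN n _ (Subgroup.zpow_mem _ (hxM n) _) h1 hh1) hh2, ?_⟩
    group
  · rintro a _ ⟨k, h, hh, rfl⟩
    refine ⟨-k, xEl n n ^ k * h⁻¹ * (xEl n n ^ k)⁻¹,
      conjN n _ (Subgroup.zpow_mem _ (hxM n) _) h⁻¹ (inv_mem hh), ?_⟩
    group

lemma tau_x_zpow (n : ℕ) (hn : 3 ≤ n) (k : ℤ) (ℓ : Leaf n) :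
    tau n (((xEl n n ^ k : ↥(treeGroup n)) : Equiv.Perm (Leaf n)) ℓ) =
      tau n ℓ + (k : ZMod 4) := by
  induction k using Int.induction_on generalizing ℓ with
  | zero => simp
  | succ k ih =>
    have e : ((xEl n n ^ ((k : ℤ) + 1) : ↥(treeGroup n)) : Equiv.Perm (Leaf n)) ℓ =
        ((xEl n n ^ (k : ℤ) : ↥(treeGroup n)) : Equiv.Perm (Leaf n))
          (((xEl n n : ↥(treeGroup n)) : Equiv.Perm (Leaf n)) ℓ) := by
      rw [zpow_add, zpow_one]
      rfl
    rw [e, ih, xEl_top_apply, tau_succFun_zero n (by omega) ℓ]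
    push_cast
    ring
  | pred k ih =>
    have e : ((xEl n n ^ (-(k : ℤ) - 1) : ↥(treeGroup n)) : Equiv.Perm (Leaf n)) ℓ =
        ((xEl n n ^ (-(k : ℤ)) : ↥(treeGroup n)) : Equiv.Perm (Leaf n))
          (((xEl n n : ↥(treeGroup n)) : Equiv.Perm (Leaf n))⁻¹ ℓ) := by
      have e0 : (-(k : ℤ) - 1) = (-(k : ℤ)) + (-1) := by ring
      rw [e0, zpow_add, zpow_neg_one]
      rfl
    have hinv : tau n ((((xEl n n : ↥(treeGroup n)) : Equiv.Perm (Leaf n))⁻¹) ℓ) =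
        tau n ℓ - 1 := by
      have h1 : ((xEl n n : ↥(treeGroup n)) : Equiv.Perm (Leaf n))
          ((((xEl n n : ↥(treeGroup n)) : Equiv.Perm (Leaf n))⁻¹) ℓ) = ℓ :=
        Equiv.apply_symm_apply _ ℓ
      have h2 := tau_succFun_zero n (by omega)
        ((((xEl n n : ↥(treeGroup n)) : Equiv.Perm (Leaf n))⁻¹) ℓ)
      rw [← xEl_top_apply, h1] at h2
      linear_combination -h2
    rw [e, ih, hinv]
    push_cast
    ring

/-- The translation-mod-4 homomorphism on `M_n`. -/
def phi (n : ℕ) (hn : 3 ≤ n) : ↥(MgrpK n n) →* Multiplicative (ZMod 4) where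
  toFun g := Multiplicative.ofAdd (cInv n g.1)
  map_one' := by
    show Multiplicative.ofAdd (cInv n ((1 : ↥(MgrpK n n)) : ↥(treeGroup n))) = 1
    rw [show cInv n ((1 : ↥(MgrpK n n)) : ↥(treeGroup n)) = 0 from tau_lf n]
    rfl
  map_mul' a b := by
    have e : cInv n ((a * b : ↥(MgrpK n n)) : ↥(treeGroup n)) =
        cInv n (a : ↥(treeGroup n)) + cInv n (b : ↥(treeGroup n)) := by
      have e' : cInv n ((a * b : ↥(MgrpK n n)) : ↥(treeGroup n)) =
          tau n (((a : ↥(treeGroup n)) : Equiv.Perm (Leaf n))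
            (((b : ↥(treeGroup n)) : Equiv.Perm (Leaf n)) (lf n))) := rfl
      rw [e', tauM hn _ a.2]
      exact add_comm _ _
    show Multiplicative.ofAdd (cInv n ((a * b : ↥(MgrpK n n)) : ↥(treeGroup n))) =
      Multiplicative.ofAdd (cInv n (a : ↥(treeGroup n))) *
        Multiplicative.ofAdd (cInv n (b : ↥(treeGroup n)))
    rw [e]
    rfl

lemma phi_apply (n : ℕ) (hn : 3 ≤ n) (g : ↥(MgrpK n n)) :
    phi n hn g = Multiplicative.ofAdd (cInv n g.1) := rfl

lemma cInv_x (n : ℕ) (hn : 3 ≤ n) : cInv n (xEl n n) = 1 := by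
  have e' : cInv n (xEl n n) =
      tau n (((xEl n n : ↥(treeGroup n)) : Equiv.Perm (Leaf n)) (lf n)) := rfl
  rw [e', xEl_top_apply, tau_succFun_zero n (by omega), tau_lf, zero_add]

end OdomAux

open OdomAux
/-- for `n ≥ 3`, with `M_n = ⟨x_n, v_{n-3}, …, v_0⟩` and `N_n` the normal
closure in `M_n` of `V_n = ⟨v_{n-3}, …, v_0⟩`, one has `M_n / N_n ≅ ℤ/4ℤ`. -/
theorem Mgrp_quotient_Ngrp (n : ℕ) (hn : 3 ≤ n) :
    ∃ φ : ↥(MgrpK n n) →* Multiplicative (ZMod 4),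
      Function.Surjective φ ∧ φ.ker = (NgrpK n n).subgroupOf (MgrpK n n) := by
  refine ⟨phi n hn, ?_, ?_⟩
  · -- surjectivity
    intro z
    refine ⟨(⟨xEl n n, hxM n⟩ : ↥(MgrpK n n)) ^ (Multiplicative.toAdd z).val, ?_⟩
    rw [map_pow, phi_apply, cInv_x n hn, ← ofAdd_nsmul, nsmul_eq_mul, mul_one]
    rw [ZMod.natCast_rightInverse (Multiplicative.toAdd z)]
    exact ofAdd_toAdd z
  · -- kernel
    ext g
    rw [MonoidHom.mem_ker, Subgroup.mem_subgroupOf, phi_apply]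
    constructor
    · intro h1
      have hc : cInv n g.1 = 0 := ofAdd_eq_one.mp h1
      obtain ⟨k, h, hh, hgh⟩ := decomp n g.1 g.2
      have e1 : cInv n g.1 = (k : ZMod 4) := by
        have e' : cInv n g.1 = tau n (((g.1 : ↥(treeGroup n)) : Equiv.Perm (Leaf n)) (lf n)) :=
          rfl
        rw [e', hgh]
        have e2 : ((xEl n n ^ k * h : ↥(treeGroup n)) : Equiv.Perm (Leaf n)) (lf n) =
            ((xEl n n ^ k : ↥(treeGroup n)) : Equiv.Perm (Leaf n))
              ((h : Equiv.Perm (Leaf n)) (lf n)) := rfl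
        rw [e2, tau_x_zpow n hn k, tauN hn h hh, tau_lf, zero_add]
      rw [e1] at hc
      obtain ⟨m, rfl⟩ := (ZMod.intCast_zmod_eq_zero_iff_dvd k 4).mp hc
      rw [hgh]
      refine mul_mem ?_ hh
      rw [zpow_mul, zpow_natCast]
      exact Subgroup.zpow_mem _ (x4_mem n hn) m
    · intro h2
      have e : cInv n g.1 = 0 := by
        have e' : cInv n g.1 = tau n (((g.1 : ↥(treeGroup n)) : Equiv.Perm (Leaf n)) (lf n)) :=
          rfl
        rw [e', tauN hn g.1 h2, tau_lf]
      rw [e]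
      rfl
end

section
/- The inverse limit $M = \varprojlim M_n$ of the groups $M_n = \langle x_n, v_{n-3},\dots,v_0\rangle$ has Hausdorff dimension $1/2$ in $W = \mathrm{Aut}(T)$; i.e., $\lim_{n\to\infty} \log_2|M_n| / \log_2|W_n| = 1/2$. -/
namespace HD
open Equiv

abbrev G (n : ℕ) := ↥(treeGroup n)

def tl {n : ℕ} (ℓ : Leaf (n+1)) : Leaf n := fun t => ℓ t.succ

def cns {n : ℕ} (b : Bool) (t : Leaf n) : Leaf (n+1) := Fin.cons b t

@[simp] lemma cns_zero {n : ℕ} (b : Bool) (t : Leaf n) : cns b t 0 = b := rfl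

@[simp] lemma cns_succ {n : ℕ} (b : Bool) (t : Leaf n) (s : Fin n) : cns b t s.succ = t s := by
  simp [cns]

@[simp] lemma tl_cns {n : ℕ} (b : Bool) (t : Leaf n) : tl (cns b t) = t := by
  funext s; simp [tl]

@[simp] lemma cns_tl {n : ℕ} (ℓ : Leaf (n+1)) : cns (ℓ 0) (tl ℓ) = ℓ :=
  Fin.cons_self_tail ℓ

lemma prefix_succ {n : ℕ} (m : ℕ) (i j : Leaf (n+1)) :
    (∀ t : Fin (n+1), (t : ℕ) < m + 1 → i t = j t) ↔
      (i 0 = j 0 ∧ ∀ s : Fin n, (s : ℕ) < m → tl i s = tl j s) := by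
  constructor
  · intro h
    refine ⟨h 0 (Nat.succ_pos m), fun s hs => h s.succ (by simpa using Nat.succ_lt_succ hs)⟩
  · rintro ⟨h0, h1⟩ t
    refine Fin.cases (fun _ => h0) (fun s ht' => ?_) t
    exact h1 s (by simpa using Nat.lt_of_succ_lt_succ ht')

/-- the wreath embedding on permutations -/
def psi {n : ℕ} (a b : Perm (Leaf n)) : Perm (Leaf (n+1)) where
  toFun ℓ := cns (ℓ 0) ((if ℓ 0 then b else a) (tl ℓ))
  invFun ℓ := cns (ℓ 0) ((if ℓ 0 then b⁻¹ else a⁻¹) (tl ℓ))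
  left_inv ℓ := by cases h : ℓ 0 <;> simp [h] <;> rw [← h, cns_tl]
  right_inv ℓ := by cases h : ℓ 0 <;> simp [h] <;> rw [← h, cns_tl]

lemma psi_apply {n : ℕ} (a b : Perm (Leaf n)) (ℓ : Leaf (n+1)) :
    psi a b ℓ = cns (ℓ 0) ((if ℓ 0 then b else a) (tl ℓ)) := rfl

@[simp] lemma psi_cns_false {n : ℕ} (a b : Perm (Leaf n)) (t : Leaf n) :
    psi a b (cns false t) = cns false (a t) := by simp [psi_apply]

@[simp] lemma psi_cns_true {n : ℕ} (a b : Perm (Leaf n)) (t : Leaf n) :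
    psi a b (cns true t) = cns true (b t) := by simp [psi_apply]

@[simp] lemma psi_zero {n : ℕ} (a b : Perm (Leaf n)) (ℓ : Leaf (n+1)) :
    psi a b ℓ 0 = ℓ 0 := by simp [psi_apply]

lemma psi_mul {n : ℕ} (a b c d : Perm (Leaf n)) :
    psi a b * psi c d = psi (a * c) (b * d) := by
  ext ℓ
  rcases h : ℓ 0 with _ | _ <;>
    · rw [Perm.mul_apply, ← cns_tl ℓ, h]
      simp [Perm.mul_apply]

@[simp] lemma psi_one {n : ℕ} : psi (1 : Perm (Leaf n)) 1 = 1 := by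
  ext ℓ
  rcases h : ℓ 0 with _ | _ <;>
    · rw [← cns_tl ℓ, h]; simp

lemma psi_mem {n : ℕ} {a b : Perm (Leaf n)} (ha : a ∈ treeGroup n) (hb : b ∈ treeGroup n) :
    psi a b ∈ treeGroup (n+1) := by
  intro m i j
  cases m with
  | zero => simp
  | succ m =>
    rw [prefix_succ, prefix_succ]
    rcases h : i 0 with _|_ <;> rcases h' : j 0 with _|_ <;>
      simp only [psi_zero, h, h'] <;> simp only [true_and, false_and, and_false,
        Bool.false_eq_true, Bool.true_eq_false, iff_self, false_iff, true_iff] <;>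
      try rfl
    · rw [← cns_tl i, ← cns_tl j, h, h']
      simp only [psi_cns_false, tl_cns]
      exact ha m (tl i) (tl j)
    · rw [← cns_tl i, ← cns_tl j, h, h']
      simp only [psi_cns_true, tl_cns]
      exact hb m (tl i) (tl j)

end HD
namespace HD
open Equiv

/-- root swap -/
def swp {n : ℕ} : Perm (Leaf (n+1)) := aPerm (n+1) (n+1)

lemma swp_apply {n : ℕ} (ℓ : Leaf (n+1)) : swp ℓ = cns (!(ℓ 0)) (tl ℓ) := by
  funext t
  show aFun (n+1) (n+1) ℓ t = _
  rw [aFun_apply]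
  refine Fin.cases ?_ (fun s => ?_) t
  · rw [if_pos ⟨by simp, fun s hs => absurd hs (by omega)⟩]
    simp
  · rw [if_neg, cns_succ]
    · rfl
    · rintro ⟨h1, -⟩; simp at h1

@[simp] lemma swp_cns {n : ℕ} (b : Bool) (t : Leaf n) : swp (cns b t) = cns (!b) t := by
  rw [swp_apply]; simp

@[simp] lemma swp_mul_swp {n : ℕ} : (swp : Perm (Leaf (n+1))) * swp = 1 :=
  Equiv.ext fun ℓ => by simp [Perm.mul_apply, swp_apply]

lemma swp_inv {n : ℕ} : (swp : Perm (Leaf (n+1)))⁻¹ = swp :=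
  inv_eq_of_mul_eq_one_right swp_mul_swp

lemma swp_mul_psi_mul_swp {n : ℕ} (a b : Perm (Leaf n)) :
    swp * psi a b * swp = psi b a := by
  ext ℓ
  rw [← cns_tl ℓ]
  rcases ℓ 0 <;> simp [Perm.mul_apply]

/-- the parity (root-swap bit) of an element -/
def par : {n : ℕ} → G n → Bool
  | 0, _ => false
  | _+1, σ => σ.1 (fun _ => false) 0

lemma par_spec {n : ℕ} (σ : G (n+1)) (ℓ : Leaf (n+1)) : σ.1 ℓ 0 = xor (ℓ 0) (par σ) := by
  have hσ := σ.2 1 ℓ (fun _ => false)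
  rcases h : ℓ 0 with _|_
  · have : ∀ t : Fin (n+1), (t : ℕ) < 1 → ℓ t = (fun _ => false) t := by
      intro t ht
      have : t = 0 := by rw [Fin.ext_iff]; simp only [Fin.val_zero]; omega
      simp [this, h]
    have := (hσ.mpr this) 0 (by simp)
    simp [par, ← this]
  · have hne : ¬ (∀ t : Fin (n+1), (t : ℕ) < 1 → ℓ t = (fun _ => false) t) := by
      intro hc
      have := hc 0 (by simp)
      simp [h] at this
    have hne2 := fun hc => hne (hσ.mp hc)
    have : ¬ σ.1 ℓ 0 = σ.1 (fun _ => false) 0 := by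
      intro hc
      exact hne2 (fun t ht => by
        have : t = 0 := by rw [Fin.ext_iff]; simp only [Fin.val_zero]; omega
        simpa [this] using hc)
    rcases hh : σ.1 ℓ 0 <;> rcases hh2 : (par σ) <;>
      simp_all [par]

lemma par_mul {n : ℕ} (σ τ : G n) : par (σ * τ) = xor (par σ) (par τ) := by
  cases n with
  | zero => rfl
  | succ n =>
    show (σ * τ).1 (fun _ => false) 0 = _
    have : (σ * τ).1 (fun _ => false) = σ.1 (τ.1 (fun _ => false)) := rfl
    rw [this, par_spec σ, par_spec τ]
    simp [Bool.xor_comm]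

@[simp] lemma par_one {n : ℕ} : par (1 : G n) = false := by
  cases n with
  | zero => rfl
  | succ n => show (1 : G (n+1)).1 (fun _ => false) 0 = false; rfl

lemma par_inv {n : ℕ} (σ : G n) : par σ⁻¹ = par σ := by
  have := par_mul σ σ⁻¹
  rw [mul_inv_cancel, par_one] at this
  rcases h : par σ <;> rcases h' : par σ⁻¹ <;> simp_all

lemma par_sq {n : ℕ} (σ : G n) : par (σ * σ) = false := by
  rw [par_mul]; simp

lemma par_conj {n : ℕ} (m σ : G n) : par (m * σ * m⁻¹) = par σ := by
  rw [par_mul, par_mul, par_inv]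
  rcases par m <;> rcases par σ <;> rfl

/-- group-level wreath embedding -/
def psiG {n : ℕ} : G n × G n →* G (n+1) where
  toFun p := ⟨psi p.1.1 p.2.1, psi_mem p.1.2 p.2.2⟩
  map_one' := by ext1; simp
  map_mul' p q := by ext1; exact (psi_mul _ _ _ _).symm

lemma psiG_coe {n : ℕ} (a b : G n) : (psiG (a, b) : Perm (Leaf (n+1))) = psi a.1 b.1 := rfl

lemma psiG_injective {n : ℕ} : Function.Injective (psiG (n := n)) := by
  intro ⟨a, b⟩ ⟨c, d⟩ h
  have h' : psi a.1 b.1 = psi c.1 d.1 := congrArg Subtype.val h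
  have ha : a = c := by
    ext t : 2
    have := congrArg (fun σ : Perm (Leaf (n+1)) => σ (cns false t)) h'
    simpa using congrArg tl this
  have hb : b = d := by
    ext t : 2
    have := congrArg (fun σ : Perm (Leaf (n+1)) => σ (cns true t)) h'
    simpa using congrArg tl this
  simp [ha, hb]

@[simp] lemma par_psiG {n : ℕ} (a b : G n) : par (psiG (a, b)) = false := by
  show (psiG (a,b)).1 (fun _ => false) 0 = false
  rw [psiG_coe, psi_apply]
  simp

/-- root swap as a group element -/
def swpG {n : ℕ} : G (n+1) := aEl (n+1) (n+1)

lemma swpG_coe {n : ℕ} : ((swpG : G (n+1)) : Perm (Leaf (n+1))) = swp := rfl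

@[simp] lemma swpG_sq {n : ℕ} : (swpG : G (n+1)) * swpG = 1 :=
  Subtype.ext swp_mul_swp

lemma swpG_inv {n : ℕ} : (swpG : G (n+1))⁻¹ = swpG := inv_eq_of_mul_eq_one_right swpG_sq

@[simp] lemma par_swpG {n : ℕ} : par (swpG : G (n+1)) = true := by
  show swp (fun _ => false) 0 = true
  rw [swp_apply]
  simp

lemma swpG_conj {n : ℕ} (a b : G n) : swpG * psiG (a, b) * swpG = psiG (b, a) :=
  Subtype.ext (swp_mul_psi_mul_swp _ _)

end HD
namespace HD
open Equiv

lemma coe_inv_perm {n : ℕ} (σ : G n) : (σ⁻¹ : G n).1 = (σ.1)⁻¹ := rfl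

lemma section_exists {n : ℕ} (σ : G (n+1)) (key : ∀ ℓ, (σ.1 ℓ) 0 = ℓ 0) (c : Bool) :
    ∃ a : G n, ∀ t, a.1 t = tl (σ.1 (cns c t)) := by
  have keyinv : ∀ ℓ, ((σ.1)⁻¹ ℓ) 0 = ℓ 0 := by
    intro ℓ
    conv_rhs => rw [← (show σ.1 ((σ.1)⁻¹ ℓ) = ℓ from σ.1.apply_symm_apply ℓ)]
    rw [key]
  have hfix : ∀ ℓ : Leaf (n+1), ℓ 0 = c → cns c (tl (σ.1 ℓ)) = σ.1 ℓ := by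
    intro ℓ hℓ
    conv_rhs => rw [← cns_tl (σ.1 ℓ)]
    rw [key, hℓ]
  have hfixinv : ∀ ℓ : Leaf (n+1), ℓ 0 = c → cns c (tl ((σ.1)⁻¹ ℓ)) = (σ.1)⁻¹ ℓ := by
    intro ℓ hℓ
    conv_rhs => rw [← cns_tl ((σ.1)⁻¹ ℓ)]
    rw [keyinv, hℓ]
  set fa : Leaf n → Leaf n := fun t => tl (σ.1 (cns c t)) with hfa
  set ga : Leaf n → Leaf n := fun t => tl ((σ.1)⁻¹ (cns c t)) with hga
  have hl : Function.LeftInverse ga fa := by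
    intro t
    show tl ((σ.1)⁻¹ (cns c (tl (σ.1 (cns c t))))) = t
    rw [hfix (cns c t) (by simp), (show ∀ x, (σ.1)⁻¹ (σ.1 x) = x from σ.1.symm_apply_apply), tl_cns]
  have hr : Function.RightInverse ga fa := by
    intro t
    show tl (σ.1 (cns c (tl ((σ.1)⁻¹ (cns c t))))) = t
    rw [hfixinv (cns c t) (by simp), (show ∀ x, σ.1 ((σ.1)⁻¹ x) = x from σ.1.apply_symm_apply), tl_cns]
  have amem : (⟨fa, ga, hl, hr⟩ : Perm (Leaf n)) ∈ treeGroup n := by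
    intro m i j
    have H := σ.2 (m+1) (cns c i) (cns c j)
    rw [prefix_succ, prefix_succ] at H
    simp only [key, cns_zero, tl_cns, true_and] at H
    exact H
  exact ⟨⟨_, amem⟩, fun t => rfl⟩

lemma exists_psiG {n : ℕ} (σ : G (n+1)) (h : par σ = false) : ∃ p, psiG p = σ := by
  have key : ∀ ℓ, (σ.1 ℓ) 0 = ℓ 0 := fun ℓ => by rw [par_spec, h]; simp
  obtain ⟨a, ha⟩ := section_exists σ key false
  obtain ⟨b, hb⟩ := section_exists σ key true
  refine ⟨(a, b), Subtype.ext (Equiv.ext fun ℓ => ?_)⟩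
  rw [psiG_coe, psi_apply]
  rcases hc : ℓ 0 with _|_
  · rw [if_neg (by simp), ha, ← hc, cns_tl]
    conv_rhs => rw [← cns_tl (σ.1 ℓ)]
    rw [key, hc]
  · rw [if_pos rfl, hb, ← hc, cns_tl]
    conv_rhs => rw [← cns_tl (σ.1 ℓ)]
    rw [key, hc]

end HD
namespace HD

variable {Γ : Type*} [Group Γ]

lemma conj_inv_mem {H : Subgroup Γ} {x : Γ} (hx2 : x * x ∈ H)
    (hc : ∀ h ∈ H, x * h * x⁻¹ ∈ H) {h : Γ} (hh : h ∈ H) : x⁻¹ * h * x ∈ H := by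
  have key : x⁻¹ * h * x = (x * x)⁻¹ * (x * h * x⁻¹) * (x * x) := by group
  rw [key]
  exact H.mul_mem (H.mul_mem (H.inv_mem hx2) (hc h hh)) hx2

def unionCoset (H : Subgroup Γ) (x : Γ) (hx2 : x * x ∈ H)
    (hc : ∀ h ∈ H, x * h * x⁻¹ ∈ H) : Subgroup Γ where
  carrier := {g | g ∈ H ∨ g * x⁻¹ ∈ H}
  one_mem' := Or.inl H.one_mem
  mul_mem' := by
    rintro a b (ha | ha) (hb | hb)
    · exact Or.inl (H.mul_mem ha hb)
    · refine Or.inr ?_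
      have : a * b * x⁻¹ = a * (b * x⁻¹) := by group
      rw [this]; exact H.mul_mem ha hb
    · refine Or.inr ?_
      have : a * b * x⁻¹ = (a * x⁻¹) * (x * b * x⁻¹) := by group
      rw [this]; exact H.mul_mem ha (hc b hb)
    · refine Or.inl ?_
      have : a * b = (a * x⁻¹) * (x * (b * x⁻¹) * x⁻¹) * (x * x) := by group
      rw [this]; exact H.mul_mem (H.mul_mem ha (hc _ hb)) hx2
  inv_mem' := by
    rintro a (ha | ha)
    · exact Or.inl (H.inv_mem ha)
    · refine Or.inr ?_
      have : a⁻¹ * x⁻¹ = (x⁻¹ * (a * x⁻¹)⁻¹ * x) * (x * x)⁻¹ := by group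
      rw [this]
      exact H.mul_mem (conj_inv_mem hx2 hc (H.inv_mem ha)) (H.inv_mem hx2)

lemma mem_unionCoset {H : Subgroup Γ} {x : Γ} {hx2 : x * x ∈ H}
    {hc : ∀ h ∈ H, x * h * x⁻¹ ∈ H} {g : Γ} :
    g ∈ unionCoset H x hx2 hc ↔ g ∈ H ∨ g * x⁻¹ ∈ H := Iff.rfl

lemma card_unionCoset {H : Subgroup Γ} {x : Γ} (hx2 : x * x ∈ H)
    (hc : ∀ h ∈ H, x * h * x⁻¹ ∈ H) (hx : x ∉ H) :
    Nat.card (unionCoset H x hx2 hc) = 2 * Nat.card H := by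
  classical
  have hxm : ∀ h : Γ, h ∈ H → ¬ (h * x ∈ H) := by
    intro h hh hmem
    exact hx (by simpa using H.mul_mem (H.inv_mem hh) hmem)
  have e : (H × Bool) ≃ (unionCoset H x hx2 hc) :=
    { toFun := fun p =>
        if p.2 then ⟨p.1 * x, Or.inr (by simpa using p.1.2)⟩
        else ⟨p.1, Or.inl p.1.2⟩
      invFun := fun g =>
        if hg : (g : Γ) ∈ H then (⟨g, hg⟩, false)
        else (⟨(g : Γ) * x⁻¹, (g.2).resolve_left hg⟩, true)
      left_inv := by
        rintro ⟨⟨h, hh⟩, (_|_)⟩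
        · simp [hh]
        · simp only [if_true]
          rw [dif_neg (hxm h hh)]
          simp
      right_inv := by
        rintro ⟨g, hg⟩
        by_cases hgH : g ∈ H
        · simp [hgH]
        · simp only [dif_neg hgH, if_true]
          exact Subtype.ext (by simp) }
  rw [← Nat.card_congr e, Nat.card_prod, Nat.card_eq_fintype_card (α := Bool)]
  simp [mul_comm]

end HD
namespace HD
open Equiv

lemma swpG_not_mem_range {n : ℕ} : (swpG : G (n+1)) ∉ psiG.range := by
  rintro ⟨⟨a, b⟩, hab⟩
  have := par_psiG a b
  rw [hab, par_swpG] at this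
  exact Bool.true_eq_false.mp this

lemma psiG_range_conj {n : ℕ} : ∀ h ∈ (psiG (n := n)).range, swpG * h * swpG⁻¹ ∈ psiG.range := by
  rintro h ⟨⟨a, b⟩, rfl⟩
  rw [swpG_inv, swpG_conj]
  exact ⟨(b, a), rfl⟩

lemma psiG_range_sq {n : ℕ} : (swpG : G (n+1)) * swpG ∈ psiG.range := by
  rw [swpG_sq]; exact Subgroup.one_mem _

lemma card_G_succ (n : ℕ) : Nat.card (G (n+1)) = 2 * (Nat.card (G n))^2 := by
  have htop : unionCoset psiG.range swpG psiG_range_sq psiG_range_conj = (⊤ : Subgroup (G (n+1))) := by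
    rw [eq_top_iff]
    intro σ _
    rw [mem_unionCoset]
    rcases h : par σ with _|_
    · exact Or.inl (exists_psiG σ h)
    · refine Or.inr ?_
      have : par (σ * swpG⁻¹) = false := by
        rw [par_mul, par_inv, h, par_swpG]; rfl
      exact exists_psiG _ this
  have hcard := card_unionCoset (psiG_range_sq (n := n)) psiG_range_conj swpG_not_mem_range
  rw [htop] at hcard
  rw [← Subgroup.card_top (G := G (n+1)), hcard,
    Nat.card_congr (MonoidHom.ofInjective psiG_injective).toEquiv.symm, Nat.card_prod, sq]

lemma card_G_zero : Nat.card (G 0) = 1 := by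
  have h1 : ∀ σ : G 0, σ = 1 := fun σ =>
    Subtype.ext (Equiv.ext fun ℓ => congrFun (Subsingleton.elim _ _) ℓ)
  rw [Nat.card_eq_one_iff_unique]
  exact ⟨⟨fun a b => by rw [h1 a, h1 b]⟩, ⟨1⟩⟩

lemma card_G (n : ℕ) : Nat.card (G n) = 2^(2^n - 1) := by
  induction n with
  | zero => simpa using card_G_zero
  | succ n ih =>
    have h1 : 1 ≤ 2^n := Nat.one_le_two_pow
    have h2 : 2^(n+1) = 2 * 2^n := by rw [pow_succ, mul_comm]
    rw [card_G_succ, ih, ← pow_mul, ← pow_succ']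
    congr 1
    omega

end HD
namespace HD
open Equiv

lemma tl_const_false {n : ℕ} : tl (fun _ => false : Leaf (n+1)) = (fun _ => false) := rfl

lemma aPerm_psi {n k : ℕ} (hk : k ≤ n) : aPerm (n+1) k = psi (aPerm n k) 1 := by
  have hd : n + 1 - k = (n - k) + 1 := by omega
  ext ℓ : 1
  rcases h0 : ℓ 0 with _|_
  · -- ℓ 0 = false
    funext t
    rw [psi_apply, h0, if_neg (by simp)]
    refine Fin.cases ?_ (fun s => ?_) t
    · rw [cns_zero, ← h0]
      show aFun (n+1) k ℓ 0 = ℓ 0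
      rw [aFun_apply, if_neg]
      rintro ⟨h1, -⟩
      simp [hd] at h1
    · rw [cns_succ]
      show aFun (n+1) k ℓ s.succ = aFun n k (tl ℓ) s
      rw [aFun_apply, aFun_apply]
      have hiff : ((s.succ : ℕ) = n + 1 - k ∧
          (∀ u : Fin (n+1), (u : ℕ) < n + 1 - k → ℓ u = false)) ↔
          ((s : ℕ) = n - k ∧ (∀ u : Fin n, (u : ℕ) < n - k → tl ℓ u = false)) := by
        rw [hd]
        constructor
        · rintro ⟨h1, h2⟩
          refine ⟨by simp at h1; omega, ?_⟩
          have := (prefix_succ (n - k) ℓ (fun _ => false)).mp (fun u hu => h2 u hu)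
          exact this.2
        · rintro ⟨h1, h2⟩
          refine ⟨by simp; omega, ?_⟩
          exact (prefix_succ (n - k) ℓ (fun _ => false)).mpr ⟨h0, h2⟩
      by_cases hcnd : (s : ℕ) = n - k ∧ (∀ u : Fin n, (u : ℕ) < n - k → tl ℓ u = false)
      · rw [if_pos (hiff.mpr hcnd), if_pos hcnd]
        rfl
      · rw [if_neg (fun hc => hcnd (hiff.mp hc)), if_neg hcnd]
        rfl
  · -- ℓ 0 = true : both sides fix ℓ
    have hR : psi (aPerm n k) 1 ℓ = ℓ := by
      conv_lhs => rw [← cns_tl ℓ, h0]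
      rw [psi_cns_true, Perm.one_apply, ← h0, cns_tl]
    rw [hR]
    funext t
    show aFun (n+1) k ℓ t = ℓ t
    rw [aFun_apply, if_neg]
    rintro ⟨-, h2⟩
    have := h2 0 (by simp; omega)
    rw [h0] at this
    exact Bool.true_eq_false.mp this

lemma aEl_psiG {n k : ℕ} (hk : k ≤ n) : aEl (n+1) k = psiG (aEl n k, 1) :=
  Subtype.ext (aPerm_psi hk)

lemma xEl_succ (n k : ℕ) : xEl n (k+1) = xEl n k * aEl n (k+1) := by
  rw [xEl, xEl, List.range_succ, List.map_append, List.prod_append]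
  simp

lemma psiG_mul_left {n : ℕ} (a b : G n) : psiG (a, 1) * psiG (b, 1) = psiG (a * b, 1) := by
  rw [← MonoidHom.map_mul, Prod.mk_mul_mk, mul_one]

lemma xEl_psiG {n k : ℕ} (hk : k ≤ n) : xEl (n+1) k = psiG (xEl n k, 1) := by
  induction k with
  | zero =>
    show (1 : G (n+1)) = psiG (1, 1)
    rw [show ((1 : G n), (1 : G n)) = (1 : G n × G n) from rfl, MonoidHom.map_one]
  | succ k ih =>
    rw [xEl_succ, xEl_succ, ih (by omega), aEl_psiG hk, psiG_mul_left]

lemma xEl_top {n : ℕ} : xEl (n+1) (n+1) = psiG (xEl n n, 1) * swpG := by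
  rw [xEl_succ, xEl_psiG (le_refl n)]
  rfl

lemma vEl_psiG {n i : ℕ} (hi : i + 2 ≤ n) : vEl (n+1) i = psiG (vEl n i, 1) := by
  rw [vEl, vEl, xEl_psiG hi, sq, sq, psiG_mul_left]

lemma par_xEl_top {n : ℕ} : par (xEl (n+1) (n+1)) = true := by
  rw [xEl_top, par_mul, par_psiG, par_swpG]
  rfl

lemma xEl_top_sq {n : ℕ} :
    xEl (n+1) (n+1) * xEl (n+1) (n+1) = psiG (xEl n n, xEl n n) := by
  rw [xEl_top]
  calc (psiG (xEl n n, 1) * swpG) * (psiG (xEl n n, 1) * swpG)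
      = psiG (xEl n n, 1) * (swpG * psiG (xEl n n, 1) * swpG) := by group
    _ = psiG (xEl n n, 1) * psiG (1, xEl n n) := by rw [swpG_conj]
    _ = psiG (xEl n n, xEl n n) := by
        rw [← MonoidHom.map_mul, Prod.mk_mul_mk, mul_one, one_mul]

lemma xEl_top_conj {n : ℕ} (a b : G n) :
    xEl (n+1) (n+1) * psiG (a, b) * (xEl (n+1) (n+1))⁻¹ =
      psiG (xEl n n * b * (xEl n n)⁻¹, a) := by
  rw [xEl_top]
  have hinv : (psiG (xEl n n, 1) * swpG)⁻¹ = swpG * psiG ((xEl n n)⁻¹, 1) := by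
    rw [mul_inv_rev, swpG_inv, ← MonoidHom.map_inv, Prod.inv_mk, inv_one]
  rw [hinv]
  calc psiG (xEl n n, 1) * swpG * psiG (a, b) * (swpG * psiG ((xEl n n)⁻¹, 1))
      = psiG (xEl n n, 1) * (swpG * psiG (a, b) * swpG) * psiG ((xEl n n)⁻¹, 1) := by group
    _ = psiG (xEl n n, 1) * psiG (b, a) * psiG ((xEl n n)⁻¹, 1) := by rw [swpG_conj]
    _ = psiG (xEl n n * b * (xEl n n)⁻¹, a) := by
        rw [← MonoidHom.map_mul, ← MonoidHom.map_mul, Prod.mk_mul_mk, Prod.mk_mul_mk]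
        simp

end HD
namespace HD
open Equiv Subgroup

abbrev Mk (n : ℕ) : Subgroup (G n) := MgrpK n n

lemma xEl_mem_Mk (n : ℕ) : xEl n n ∈ Mk n :=
  subset_closure (Set.mem_insert _ _)

lemma vEl_mem_Mk {n i : ℕ} (hi : i + 3 ≤ n) : vEl n i ∈ Mk n :=
  subset_closure (Set.mem_insert_of_mem _ ⟨i, hi, rfl⟩)

lemma vEl_top {n : ℕ} (hn : 2 ≤ n) : vEl n (n-2) = xEl n n * xEl n n := by
  rw [vEl, show n - 2 + 2 = n by omega, sq]

lemma vEl_mem_Mk' {n i : ℕ} (hn : 2 ≤ n) (hi : i + 2 ≤ n) : vEl n i ∈ Mk n := by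
  rcases Nat.lt_or_ge (i+2) n with h | h
  · exact vEl_mem_Mk (by omega)
  · have : i = n - 2 := by omega
    rw [this, vEl_top hn]
    exact mul_mem (xEl_mem_Mk n) (xEl_mem_Mk n)

lemma par_vEl {n i : ℕ} : par (vEl n i) = false := by
  rw [vEl, sq, par_sq]

lemma par_x {n : ℕ} (hn : 1 ≤ n) : par (xEl n n) = true := by
  cases n with
  | zero => omega
  | succ n => exact par_xEl_top

/-- the set of `v`'s including the extra top one `x^2` -/
def Vplus (n : ℕ) : Set (G n) := {g | ∃ i : ℕ, i + 2 ≤ n ∧ g = vEl n i}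

/-- normal closure of the `v`'s in `M` -/
def Kgrp (n : ℕ) : Subgroup (G n) :=
  closure {g | ∃ m ∈ Mk n, ∃ v ∈ Vplus n, g = m * v * m⁻¹}

lemma Kgrp_le {n : ℕ} (hn : 2 ≤ n) : Kgrp n ≤ Mk n := by
  rw [Kgrp, closure_le]
  rintro g ⟨m, hm, v, ⟨i, hi, rfl⟩, rfl⟩
  exact mul_mem (mul_mem hm (vEl_mem_Mk' hn hi)) (inv_mem hm)

lemma sq_mem_Kgrp {n : ℕ} (hn : 2 ≤ n) : xEl n n * xEl n n ∈ Kgrp n := by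
  rw [← vEl_top hn]
  refine subset_closure ⟨1, one_mem _, vEl n (n-2), ⟨n-2, by omega, rfl⟩, by group⟩

lemma par_Kgrp {n : ℕ} {g : G n} (hg : g ∈ Kgrp n) : par g = false := by
  refine closure_induction ?_ ?_ ?_ ?_ hg
  · rintro g ⟨m, hm, v, ⟨i, hi, rfl⟩, rfl⟩
    rw [par_conj, par_vEl]
  · exact par_one
  · intro a b _ _ ha hb
    rw [par_mul, ha, hb]; rfl
  · intro a _ ha
    rw [par_inv, ha]

lemma conj_Kgrp {n : ℕ} {m g : G n} (hm : m ∈ Mk n) (hg : g ∈ Kgrp n) :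
    m * g * m⁻¹ ∈ Kgrp n := by
  refine closure_induction (p := fun g _ => m * g * m⁻¹ ∈ Kgrp n) ?_ ?_ ?_ ?_ hg
  · rintro g ⟨m', hm', v, hv, rfl⟩
    refine subset_closure ⟨m * m', mul_mem hm hm', v, hv, by group⟩
  · simpa using one_mem (Kgrp n)
  · intro a b _ _ ha hb
    have : m * (a * b) * m⁻¹ = (m * a * m⁻¹) * (m * b * m⁻¹) := by group
    rw [this]; exact mul_mem ha hb
  · intro a _ ha
    have : m * a⁻¹ * m⁻¹ = (m * a * m⁻¹)⁻¹ := by group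
    rw [this]; exact inv_mem ha

lemma Mk_eq_unionCoset {n : ℕ} (hn : 2 ≤ n) :
    Mk n = unionCoset (Kgrp n) (xEl n n) (sq_mem_Kgrp hn)
      (fun g hg => conj_Kgrp (xEl_mem_Mk n) hg) := by
  apply le_antisymm
  · refine (closure_le _).mpr ?_
    rintro g (rfl | ⟨i, hi, rfl⟩)
    · exact Or.inr (by simpa using one_mem (Kgrp n))
    · exact Or.inl (subset_closure ⟨1, one_mem _, vEl n i, ⟨i, by omega, rfl⟩, by group⟩)
  · rintro g (hg | hg)
    · exact Kgrp_le hn hg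
    · have : g = (g * (xEl n n)⁻¹) * xEl n n := by group
      rw [this]
      exact mul_mem (Kgrp_le hn hg) (xEl_mem_Mk n)

lemma x_not_mem_Kgrp {n : ℕ} (hn : 2 ≤ n) : xEl n n ∉ Kgrp n := fun hc => by
  have := par_Kgrp hc
  rw [par_x (by omega)] at this
  exact Bool.true_eq_false.mp this

lemma card_Mk_eq {n : ℕ} (hn : 2 ≤ n) : Nat.card (Mk n) = 2 * Nat.card (Kgrp n) := by
  rw [Mk_eq_unionCoset hn]
  exact card_unionCoset _ _ (x_not_mem_Kgrp hn)

lemma mem_Kgrp_of_par {n : ℕ} (hn : 2 ≤ n) {g : G n} (hg : g ∈ Mk n)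
    (hpar : par g = false) : g ∈ Kgrp n := by
  rw [Mk_eq_unionCoset hn] at hg
  rcases hg with hg | hg
  · exact hg
  · exfalso
    have : g = (g * (xEl n n)⁻¹) * xEl n n := by group
    rw [this, par_mul, par_Kgrp hg, par_x (by omega)] at hpar
    simp at hpar

end HD
namespace HD
open Equiv Subgroup

/-- the fiber product `{(a,b) ∈ M × M : par a = par b}` -/
def Pgrp (n : ℕ) : Subgroup (G n × G n) where
  carrier := {p | p.1 ∈ Mk n ∧ p.2 ∈ Mk n ∧ par p.1 = par p.2}
  one_mem' := ⟨one_mem _, one_mem _, rfl⟩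
  mul_mem' := by
    rintro a b ⟨ha1, ha2, ha3⟩ ⟨hb1, hb2, hb3⟩
    exact ⟨mul_mem ha1 hb1, mul_mem ha2 hb2, by
      show par (a.1 * b.1) = par (a.2 * b.2)
      rw [par_mul, par_mul, ha3, hb3]⟩
  inv_mem' := by
    rintro a ⟨ha1, ha2, ha3⟩
    exact ⟨inv_mem ha1, inv_mem ha2, by
      show par a.1⁻¹ = par a.2⁻¹
      rw [par_inv, par_inv, ha3]⟩

lemma mem_Pgrp {n : ℕ} {p : G n × G n} :
    p ∈ Pgrp n ↔ p.1 ∈ Mk n ∧ p.2 ∈ Mk n ∧ par p.1 = par p.2 := Iff.rfl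

/-- pullback of `M_{n+1}` along `psiG` -/
def Tgrp (n : ℕ) : Subgroup (G n × G n) := comap psiG (Mk (n+1))

lemma v_one_mem_Tgrp {n i : ℕ} (hi : i + 2 ≤ n) : (vEl n i, (1 : G n)) ∈ Tgrp n := by
  show psiG (vEl n i, 1) ∈ Mk (n+1)
  rw [← vEl_psiG hi]
  exact vEl_mem_Mk (by omega)

lemma x_x_mem_Tgrp {n : ℕ} : (xEl n n, xEl n n) ∈ Tgrp n := by
  show psiG (xEl n n, xEl n n) ∈ Mk (n+1)
  rw [← xEl_top_sq]
  exact mul_mem (xEl_mem_Mk _) (xEl_mem_Mk _)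

lemma Tgrp_rot {n : ℕ} {a b : G n} (h : (a, b) ∈ Tgrp n) :
    (xEl n n * b * (xEl n n)⁻¹, a) ∈ Tgrp n := by
  show psiG _ ∈ Mk (n+1)
  rw [← xEl_top_conj]
  exact mul_mem (mul_mem (xEl_mem_Mk _) h) (inv_mem (xEl_mem_Mk _))

lemma one_v_mem_Tgrp {n i : ℕ} (hi : i + 2 ≤ n) : ((1 : G n), vEl n i) ∈ Tgrp n := by
  have := Tgrp_rot (v_one_mem_Tgrp hi)
  simpa using this

lemma fst_Tgrp {n : ℕ} {m : G n} (hm : m ∈ Mk n) : ∃ b, (m, b) ∈ Tgrp n := by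
  have : Mk n ≤ map (MonoidHom.fst (G n) (G n)) (Tgrp n) := by
    refine (closure_le _).mpr ?_
    rintro g (rfl | ⟨i, hi, rfl⟩)
    · exact ⟨(xEl n n, xEl n n), x_x_mem_Tgrp, rfl⟩
    · exact ⟨(vEl n i, 1), v_one_mem_Tgrp (by omega), rfl⟩
  obtain ⟨p, hp, hp1⟩ := this hm
  exact ⟨p.2, by rwa [show (m, p.2) = p by rw [← hp1]; rfl]⟩

lemma snd_Tgrp {n : ℕ} {m : G n} (hm : m ∈ Mk n) : ∃ a, (a, m) ∈ Tgrp n := by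
  have : Mk n ≤ map (MonoidHom.snd (G n) (G n)) (Tgrp n) := by
    refine (closure_le _).mpr ?_
    rintro g (rfl | ⟨i, hi, rfl⟩)
    · exact ⟨(xEl n n, xEl n n), x_x_mem_Tgrp, rfl⟩
    · exact ⟨(1, vEl n i), one_v_mem_Tgrp (by omega), rfl⟩
  obtain ⟨p, hp, hp1⟩ := this hm
  exact ⟨p.1, by rwa [show (p.1, m) = p by rw [← hp1]; rfl]⟩

lemma K_one_mem_Tgrp {n : ℕ} {g : G n} (hg : g ∈ Kgrp n) : (g, (1 : G n)) ∈ Tgrp n := by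
  refine closure_induction (p := fun g _ => (g, (1 : G n)) ∈ Tgrp n) ?_ ?_ ?_ ?_ hg
  · rintro g ⟨m, hm, v, ⟨i, hi, rfl⟩, rfl⟩
    obtain ⟨b, hb⟩ := fst_Tgrp hm
    have := mul_mem (mul_mem hb (v_one_mem_Tgrp hi)) (inv_mem hb)
    simpa using this
  · exact one_mem _
  · intro a b _ _ ha hb
    have := mul_mem ha hb
    simpa using this
  · intro a _ ha
    have := inv_mem ha
    simpa using this

lemma one_K_mem_Tgrp {n : ℕ} {g : G n} (hg : g ∈ Kgrp n) : ((1 : G n), g) ∈ Tgrp n := by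
  refine closure_induction (p := fun g _ => ((1 : G n), g) ∈ Tgrp n) ?_ ?_ ?_ ?_ hg
  · rintro g ⟨m, hm, v, ⟨i, hi, rfl⟩, rfl⟩
    obtain ⟨a, hb⟩ := snd_Tgrp hm
    have := mul_mem (mul_mem hb (one_v_mem_Tgrp hi)) (inv_mem hb)
    simpa using this
  · exact one_mem _
  · intro a b _ _ ha hb
    have := mul_mem ha hb
    simpa using this
  · intro a _ ha
    have := inv_mem ha
    simpa using this

lemma Pgrp_le_Tgrp {n : ℕ} (hn : 2 ≤ n) : Pgrp n ≤ Tgrp n := by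
  rintro ⟨a, b⟩ ⟨ha, hb, hpar⟩
  rcases hε : par a with _|_
  · have hKa : a ∈ Kgrp n := mem_Kgrp_of_par hn ha hε
    have hKb : b ∈ Kgrp n := mem_Kgrp_of_par hn hb (by rw [← hpar, hε])
    have := mul_mem (K_one_mem_Tgrp hKa) (one_K_mem_Tgrp hKb)
    simpa using this
  · have hxm := xEl_mem_Mk n
    have hKa : a * (xEl n n)⁻¹ ∈ Kgrp n := by
      refine mem_Kgrp_of_par hn (mul_mem ha (inv_mem hxm)) ?_
      rw [par_mul, par_inv, hε, par_x (by omega)]; rfl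
    have hKb : b * (xEl n n)⁻¹ ∈ Kgrp n := by
      refine mem_Kgrp_of_par hn (mul_mem hb (inv_mem hxm)) ?_
      rw [par_mul, par_inv, ← hpar, hε, par_x (by omega)]; rfl
    have hmem := mul_mem (mul_mem (K_one_mem_Tgrp hKa) (one_K_mem_Tgrp hKb)) x_x_mem_Tgrp
    have heq : ((a * (xEl n n)⁻¹, (1:G n)) * ((1:G n), b * (xEl n n)⁻¹)) *
        (xEl n n, xEl n n) = (a, b) := by
      rw [Prod.mk_mul_mk, Prod.mk_mul_mk]
      refine Prod.ext ?_ ?_ <;> simp <;> group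
    rwa [heq] at hmem

end HD
namespace HD
open Equiv Subgroup

lemma sq_mem_mapP {n : ℕ} :
    xEl (n+1) (n+1) * xEl (n+1) (n+1) ∈ map (psiG (n := n)) (Pgrp n) := by
  rw [xEl_top_sq]
  exact ⟨(xEl n n, xEl n n), ⟨xEl_mem_Mk n, xEl_mem_Mk n, rfl⟩, rfl⟩

lemma conj_mapP {n : ℕ} :
    ∀ h ∈ map (psiG (n := n)) (Pgrp n),
      xEl (n+1) (n+1) * h * (xEl (n+1) (n+1))⁻¹ ∈ map (psiG (n := n)) (Pgrp n) := by
  rintro h ⟨⟨a, b⟩, ⟨ha, hb, hpar⟩, rfl⟩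
  rw [xEl_top_conj]
  refine ⟨(xEl n n * b * (xEl n n)⁻¹, a), ⟨?_, ha, ?_⟩, rfl⟩
  · exact mul_mem (mul_mem (xEl_mem_Mk n) hb) (inv_mem (xEl_mem_Mk n))
  · show par (xEl n n * b * (xEl n n)⁻¹) = par a
    rw [par_conj, ← hpar]

lemma x_not_mem_mapP {n : ℕ} : xEl (n+1) (n+1) ∉ map (psiG (n := n)) (Pgrp n) := by
  rintro ⟨⟨a, b⟩, -, hab⟩
  have h1 := par_psiG a b
  rw [hab, par_xEl_top] at h1
  exact Bool.true_eq_false.mp h1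

lemma Mk_succ_eq {n : ℕ} (hn : 2 ≤ n) :
    Mk (n+1) = unionCoset (map (psiG (n := n)) (Pgrp n)) (xEl (n+1) (n+1))
      sq_mem_mapP conj_mapP := by
  apply le_antisymm
  · refine (closure_le _).mpr ?_
    rintro g (rfl | ⟨i, hi, rfl⟩)
    · exact Or.inr (by simpa using one_mem (map (psiG (n := n)) (Pgrp n)))
    · refine Or.inl ?_
      have hi2 : i + 2 ≤ n := by omega
      rw [vEl_psiG hi2]
      exact ⟨(vEl n i, 1), ⟨vEl_mem_Mk' hn hi2, one_mem _, by rw [par_vEl, par_one]⟩, rfl⟩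
  · rintro g (hg | hg)
    · obtain ⟨p, hp, rfl⟩ := hg
      exact Pgrp_le_Tgrp hn hp
    · obtain ⟨p, hp, hp1⟩ := hg
      have : g = (g * (xEl (n+1) (n+1))⁻¹) * xEl (n+1) (n+1) := by group
      rw [this, ← hp1]
      exact mul_mem (Pgrp_le_Tgrp hn hp) (xEl_mem_Mk _)

lemma card_Pgrp {n : ℕ} (hn : 2 ≤ n) :
    Nat.card (Pgrp n) = Nat.card (Mk n) * Nat.card (Kgrp n) := by
  have e : (Pgrp n) ≃ (Mk n × Kgrp n) :=
    { toFun := fun p =>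
        (⟨p.1.1, p.2.1⟩, ⟨p.1.2 * p.1.1⁻¹, by
          obtain ⟨h1, h2, h3⟩ := p.2
          exact mem_Kgrp_of_par hn (mul_mem h2 (inv_mem h1))
            (by rw [par_mul, par_inv, ← h3]; rcases par p.1.1 <;> rfl)⟩)
      invFun := fun q =>
        ⟨(q.1.1, q.2.1 * q.1.1), ⟨q.1.2, mul_mem (Kgrp_le hn q.2.2) q.1.2, by
          show par q.1.1 = par (q.2.1 * q.1.1)
          rw [par_mul, par_Kgrp q.2.2]; rcases par q.1.1 <;> rfl⟩⟩
      left_inv := fun p => by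
        apply Subtype.ext
        refine Prod.ext rfl ?_
        show p.1.2 * p.1.1⁻¹ * p.1.1 = p.1.2
        group
      right_inv := fun q => by
        refine Prod.ext (Subtype.ext rfl) (Subtype.ext ?_)
        show q.2.1 * q.1.1 * q.1.1⁻¹ = q.2.1
        group }
  rw [Nat.card_congr e, Nat.card_prod]

lemma card_Mk_succ {n : ℕ} (hn : 2 ≤ n) :
    Nat.card (Mk (n+1)) = Nat.card (Mk n) ^ 2 := by
  have h1 : Nat.card (map (psiG (n := n)) (Pgrp n)) = Nat.card (Pgrp n) :=
    (Nat.card_congr (Subgroup.equivMapOfInjective (Pgrp n) psiG psiG_injective).toEquiv).symm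
  rw [Mk_succ_eq hn, card_unionCoset _ _ x_not_mem_mapP, h1, card_Pgrp hn,
    ← mul_assoc, mul_comm 2 (Nat.card (Mk n)), mul_assoc, ← card_Mk_eq hn, sq]

lemma xEl_zero (n : ℕ) : xEl n 0 = 1 := rfl

lemma card_Mk_two : Nat.card (Mk 2) = 4 := by
  have hV : VsetK 2 2 = ∅ := by
    ext g
    simp only [VsetK, Set.mem_setOf_eq, Set.mem_empty_iff_false, iff_false]
    rintro ⟨i, hi, -⟩
    omega
  have hM : Mk 2 = closure {xEl 2 2} := by
    rw [Mk, MgrpK, hV]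
    congr 1
    simp
  have hx1 : xEl 1 1 = swpG := by
    rw [xEl_top, xEl_zero]
    rw [show ((1 : G 0), (1 : G 0)) = (1 : G 0 × G 0) from rfl, MonoidHom.map_one, one_mul]
  have hsq : xEl 2 2 ^ 2 = psiG (swpG, swpG) := by
    rw [sq, xEl_top_sq, hx1]
  have h4 : xEl 2 2 ^ 4 = 1 := by
    have : (4 : ℕ) = 2 * 2 := rfl
    rw [this, pow_mul, hsq, sq, ← MonoidHom.map_mul, Prod.mk_mul_mk, swpG_sq]
    rw [show ((1 : G 1), (1 : G 1)) = (1 : G 1 × G 1) from rfl, MonoidHom.map_one]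
  have h2 : xEl 2 2 ^ 2 ≠ 1 := by
    rw [hsq]
    intro hc
    have h1 : psiG ((swpG : G 1), swpG) = psiG (1, 1) := by
      rw [hc, show ((1 : G 1), (1 : G 1)) = (1 : G 1 × G 1) from rfl, MonoidHom.map_one]
    have h2 := congrArg Prod.fst (psiG_injective h1)
    have h3 := par_swpG (n := 0)
    rw [show (swpG : G 1) = 1 from h2, par_one] at h3
    exact Bool.true_eq_false.mp h3.symm
  have horder : orderOf (xEl 2 2) = 4 := by
    have hdvd : orderOf (xEl 2 2) ∣ 2 ^ 2 := orderOf_dvd_of_pow_eq_one h4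
    rcases (Nat.dvd_prime_pow Nat.prime_two).mp hdvd with ⟨k, hk, hek⟩
    interval_cases k
    · exact absurd (orderOf_dvd_iff_pow_eq_one.mp (hek ▸ (by norm_num))) h2
    · exact absurd (orderOf_dvd_iff_pow_eq_one.mp (hek ▸ (by norm_num))) h2
    · rw [hek]; rfl
  rw [hM, ← zpowers_eq_closure, Nat.card_zpowers, horder]

end HD
namespace HD
open Equiv Subgroup Filter Real

lemma card_Mk_formula : ∀ n : ℕ, 2 ≤ n → Nat.card (Mk n) = 2 ^ (2 ^ (n - 1)) := by
  intro n
  induction n with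
  | zero => omega
  | succ n ih =>
    intro hn
    rcases Nat.lt_or_ge n 2 with h | h
    · have hn1 : n = 1 := by omega
      subst hn1
      simpa using card_Mk_two
    · rw [card_Mk_succ h, ih h, ← pow_mul]
      congr 1
      have : 2 ^ (n - 1) * 2 = 2 ^ n := by
        rw [← pow_succ]
        congr 1
        omega
      simpa using this

lemma logb_two_pow (k : ℕ) : Real.logb 2 ((2^k : ℕ) : ℝ) = k := by
  push_cast
  rw [Real.logb_pow]
  simp [Real.logb_self_eq_one]

lemma aux_tendsto :
    Tendsto (fun n : ℕ => (2:ℝ)^(n+1) / ((2:ℝ)^(n+2) - 1)) atTop (nhds (1/2)) := by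
  have key : ∀ n : ℕ, (2:ℝ)^(n+1) / ((2:ℝ)^(n+2) - 1) = 1 / (2 - ((1:ℝ)/2)^(n+1)) := by
    intro n
    have hp : (0:ℝ) < 2^(n+2) - 1 := by
      have h1 : (2:ℝ)^1 ≤ (2:ℝ)^(n+2) := by
        apply pow_le_pow_right₀ (by norm_num)
        omega
      simp at h1
      linarith
    have hhalf : ((1:ℝ)/2)^(n+1) ≤ (1:ℝ)/2 := by
      calc ((1:ℝ)/2)^(n+1) ≤ ((1:ℝ)/2)^1 :=
            pow_le_pow_of_le_one (by norm_num) (by norm_num) (by omega)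
        _ = 1/2 := pow_one _
    have hq : (0:ℝ) < 2 - ((1:ℝ)/2)^(n+1) := by linarith
    have hmul : (2:ℝ)^(n+1) * ((1:ℝ)/2)^(n+1) = 1 := by
      rw [← mul_pow]
      norm_num
    rw [div_eq_div_iff hp.ne' hq.ne', mul_sub, hmul]
    ring
  have h0 : Tendsto (fun n : ℕ => ((1:ℝ)/2)^(n+1)) atTop (nhds 0) := by
    have := (tendsto_pow_atTop_nhds_zero_of_lt_one (r := (1:ℝ)/2) (by norm_num) (by norm_num))
    exact (Filter.tendsto_add_atTop_iff_nat 1).mpr this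
  have h1 : Tendsto (fun n : ℕ => 1 / (2 - ((1:ℝ)/2)^(n+1))) atTop (nhds (1/(2 - 0))) :=
    Filter.Tendsto.div tendsto_const_nhds (Filter.Tendsto.sub tendsto_const_nhds h0) (by norm_num)
  rw [show (1:ℝ)/(2-0) = 1/2 by norm_num] at h1
  exact h1.congr (fun n => (key n).symm)

end HD

/-- the inverse limit of the groups `M_n = ⟨x_n, v_{n-3}, …, v_0⟩` has
Hausdorff dimension `1/2` in `Aut(T)`, i.e. `lim_n log₂|M_n| / log₂|W_n| = 1/2`. -/
theorem hausdorffDim_M :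
    Filter.Tendsto
      (fun n : ℕ =>
        Real.logb 2 (Nat.card ↥(MgrpK n n)) / Real.logb 2 (Nat.card ↥(treeGroup n)))
      Filter.atTop (nhds (1 / 2)) := by
  rw [← Filter.tendsto_add_atTop_iff_nat 2]
  refine HD.aux_tendsto.congr (fun n => ?_)
  have hM : Nat.card ↥(MgrpK (n+2) (n+2)) = 2 ^ (2^(n+1)) := by
    rw [show Nat.card ↥(MgrpK (n+2) (n+2)) = Nat.card (HD.Mk (n+2)) from rfl,
      HD.card_Mk_formula (n+2) (by omega)]
    norm_num
  have hW : Nat.card ↥(treeGroup (n+2)) = 2 ^ (2^(n+2) - 1) := HD.card_G (n+2)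
  rw [hM, hW, HD.logb_two_pow, HD.logb_two_pow]
  have h1 : ((2^(n+1) : ℕ) : ℝ) = (2:ℝ)^(n+1) := by push_cast; ring
  have h2 : ((2^(n+2) - 1 : ℕ) : ℝ) = (2:ℝ)^(n+2) - 1 := by
    have : 1 ≤ 2^(n+2) := Nat.one_le_two_pow
    push_cast [this]
    ring
  rw [h1, h2]
end

section
/- In $W_n$ (for $n \geq 2$), with $m_n = a_{n-1} \cdot (x_{n-2})^{x_n}$, the identity $x_n^2 = v_{n-4} \cdot [x_n, m_n]^{-1}$ holds, where $v_{n-4} = x_{n-2}^2$; equivalently $x_n^2 [x_n, m_n] = x_{n-2}^2$. -/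
/-! ### Auxiliary machinery: numeric encoding of leaves -/

def ofN (n v : ℕ) : Leaf n := fun t => v.testBit t

lemma ofN_surjective (n : ℕ) (ℓ : Leaf n) : ∃ v, v < 2 ^ n ∧ ℓ = ofN n v := by
  have hinj : Function.Injective (fun v : Fin (2 ^ n) => ofN n (v : ℕ)) := by
    intro v w h
    apply Fin.ext
    apply Nat.eq_of_testBit_eq
    intro i
    by_cases hi : i < n
    · exact congrFun h ⟨i, hi⟩
    · rw [Nat.testBit_lt_two_pow, Nat.testBit_lt_two_pow]
      · exact lt_of_lt_of_le w.isLt (Nat.pow_le_pow_right (by norm_num) (le_of_not_gt hi))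
      · exact lt_of_lt_of_le v.isLt (Nat.pow_le_pow_right (by norm_num) (le_of_not_gt hi))
  have hbij : Function.Bijective (fun v : Fin (2 ^ n) => ofN n (v : ℕ)) := by
    rw [Fintype.bijective_iff_injective_and_card]
    refine ⟨hinj, by simp [Leaf]⟩
  obtain ⟨v, hv⟩ := hbij.surjective ℓ
  exact ⟨v, v.isLt, hv.symm⟩

lemma ofN_cond (n m : ℕ) (hm : m ≤ n) (v : ℕ) :
    (∀ s : Fin n, (s : ℕ) < m → ofN n v s = false) ↔ v % 2 ^ m = 0 := by
  constructor
  · intro h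
    apply Nat.eq_of_testBit_eq
    intro i
    rw [Nat.zero_testBit, Nat.testBit_mod_two_pow]
    by_cases hi : i < m
    · simp only [hi, decide_true, Bool.true_and]
      exact h ⟨i, hi.trans_le hm⟩ hi
    · simp [hi]
  · intro h s hs
    have h2 := congrArg (fun x => Nat.testBit x (s : ℕ)) h
    simp only [Nat.testBit_mod_two_pow, Nat.zero_testBit, hs, decide_true,
      Bool.true_and] at h2
    exact h2

/-! ### Action of the generators on encoded leaves -/

lemma aPerm_fix (n k m : ℕ) (hm : n - k = m) (v : ℕ) (h : v % 2 ^ m ≠ 0) :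
    aPerm n k (ofN n v) = ofN n v := by
  subst hm
  funext t
  rw [aPerm_apply, aFun_apply, if_neg]
  rintro ⟨-, h2⟩
  exact h ((ofN_cond n (n - k) (Nat.sub_le n k) v).mp h2)

lemma aPerm_add (n k m : ℕ) (hm : n - k = m) (hk1 : 1 ≤ k) (hkn : k ≤ n) (v : ℕ)
    (h : v % 2 ^ (m + 1) = 0) :
    aPerm n k (ofN n v) = ofN n (v + 2 ^ m) := by
  subst hm
  set m := n - k with hmdef
  have hmn : m < n := by omega
  obtain ⟨q, hq⟩ : 2 ^ (m + 1) ∣ v := Nat.dvd_of_mod_eq_zero h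
  have hlow : v % 2 ^ m = 0 := by
    have he : 2 ^ (m + 1) * q = 2 ^ m * (2 * q) := by ring
    rw [hq, he, Nat.mul_mod_right]
  have hbitm : v.testBit m = false := by
    have h2 := Nat.testBit_mod_two_pow v (m + 1) m
    rw [h] at h2
    simpa using h2.symm
  have hcond : ∀ s : Fin n, (s : ℕ) < m → ofN n v s = false :=
    (ofN_cond n m (le_of_lt hmn) v).mpr hlow
  funext t
  rw [aPerm_apply, aFun_apply]
  by_cases ht : (t : ℕ) = m
  · rw [if_pos ⟨ht, hcond⟩]
    show (!(v.testBit (t : ℕ))) = ((v + 2 ^ m).testBit (t : ℕ))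
    rw [ht, hbitm, Nat.add_comm, Nat.testBit_two_pow_add_eq, hbitm]
  · rw [if_neg (by rintro ⟨h1, -⟩; exact ht h1)]
    show v.testBit (t : ℕ) = (v + 2 ^ m).testBit (t : ℕ)
    by_cases ht2 : (t : ℕ) < m
    · rw [Nat.add_comm, Nat.testBit_two_pow_add_gt ht2]
    · have hlt : ¬ ((t : ℕ) < m + 1) := by omega
      have e1 : (v + 2 ^ m).testBit (t : ℕ) = q.testBit ((t : ℕ) - (m + 1)) := by
        rw [hq, Nat.testBit_two_pow_mul_add q
          (Nat.pow_lt_pow_right (by norm_num) (Nat.lt_succ_self m)) (t : ℕ), if_neg hlt]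
      have e2 : v.testBit (t : ℕ) = q.testBit ((t : ℕ) - (m + 1)) := by
        rw [hq, Nat.testBit_two_pow_mul]
        simp [Nat.le_of_not_lt hlt]
      rw [e1, e2]

lemma mod_sub_of_mod (m v : ℕ) (h : v % 2 ^ (m + 1) = 2 ^ m) :
    2 ^ m ≤ v ∧ (v - 2 ^ m) % 2 ^ (m + 1) = 0 := by
  have hle : 2 ^ m ≤ v := by
    have h2 := Nat.mod_le v (2 ^ (m + 1))
    omega
  refine ⟨hle, ?_⟩
  have hdm := Nat.div_add_mod v (2 ^ (m + 1))
  set A := 2 ^ (m + 1) * (v / 2 ^ (m + 1)) with hA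
  have hsub : v - 2 ^ m = A := by omega
  rw [hsub, hA, Nat.mul_mod_right]

lemma aPerm_sub (n k m : ℕ) (hm : n - k = m) (hk1 : 1 ≤ k) (hkn : k ≤ n) (v : ℕ)
    (h : v % 2 ^ (m + 1) = 2 ^ m) :
    aPerm n k (ofN n v) = ofN n (v - 2 ^ m) := by
  obtain ⟨hle, hsub⟩ := mod_sub_of_mod m v h
  have hv' : v = (v - 2 ^ m) + 2 ^ m := by omega
  conv_lhs => rw [hv', ← aPerm_add n k m hm hk1 hkn (v - 2 ^ m) hsub]
  show aFun n k (aFun n k (ofN n (v - 2 ^ m))) = _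
  rw [aFun_involutive n k (ofN n (v - 2 ^ m))]

/-! ### Action of the odometers -/

def xFun (n k v : ℕ) : ℕ := if v % 2 ^ (n - k) = 0 then (v + 2 ^ (n - k)) % 2 ^ n else v

lemma xFun_lt (n k v : ℕ) (hv : v < 2 ^ n) : xFun n k v < 2 ^ n := by
  unfold xFun
  split
  · exact Nat.mod_lt _ (Nat.two_pow_pos n)
  · exact hv

lemma xEl_zero (n : ℕ) : xEl n 0 = 1 := rfl

lemma xEl_succ (n k : ℕ) : xEl n (k + 1) = xEl n k * aEl n (k + 1) := by
  unfold xEl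
  rw [List.range_succ, List.map_append, List.prod_append]
  simp

lemma aEl_coe (n k : ℕ) : ((aEl n k : ↥(treeGroup n)) : Equiv.Perm (Leaf n)) = aPerm n k := rfl

lemma xEl_apply (n : ℕ) : ∀ k, k ≤ n → ∀ v, v < 2 ^ n →
    ((xEl n k : ↥(treeGroup n)) : Equiv.Perm (Leaf n)) (ofN n v) = ofN n (xFun n k v) := by
  intro k
  induction k with
  | zero =>
    intro _ v hv
    have hx : xFun n 0 v = v := by
      unfold xFun
      rcases eq_or_ne (v % 2 ^ (n - 0)) 0 with h | h
      · rw [if_pos h]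
        have hv0 : v = 0 := by
          rwa [Nat.sub_zero, Nat.mod_eq_of_lt hv] at h
        simp [hv0]
      · rw [if_neg h]
    rw [xEl_zero, hx]
    rfl
  | succ k ih =>
    intro hk v hv
    set m := n - (k + 1) with hmdef
    have hmk : n - k = m + 1 := by omega
    rw [xEl_succ]
    have hmul : ((xEl n k * aEl n (k + 1) : ↥(treeGroup n)) : Equiv.Perm (Leaf n))
        = (xEl n k : Equiv.Perm (Leaf n)) * (aEl n (k + 1) : Equiv.Perm (Leaf n)) := rfl
    rw [hmul, Equiv.Perm.mul_apply, aEl_coe]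
    by_cases h0 : v % 2 ^ m = 0
    · by_cases h1 : v % 2 ^ (m + 1) = 0
      · -- case (ii)
        rw [aPerm_add n (k + 1) m hmdef.symm (by omega) hk v h1]
        have hv2 : v + 2 ^ (m + 1) ≤ 2 ^ n := by
          obtain ⟨c, hc⟩ : 2 ^ (m + 1) ∣ v := Nat.dvd_of_mod_eq_zero h1
          obtain ⟨d, hd⟩ : 2 ^ (m + 1) ∣ 2 ^ n := pow_dvd_pow 2 (by omega)
          have hcd : c < d := by
            have := hv
            rw [hc, hd] at this
            exact lt_of_mul_lt_mul_left this (Nat.zero_le _)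
          calc v + 2 ^ (m + 1) = 2 ^ (m + 1) * (c + 1) := by rw [hc]; ring
            _ ≤ 2 ^ (m + 1) * d := Nat.mul_le_mul_left _ hcd
            _ = 2 ^ n := hd.symm
        have hpow : 2 ^ m < 2 ^ (m + 1) := Nat.pow_lt_pow_right (by norm_num) (Nat.lt_succ_self m)
        have hvm : v + 2 ^ m < 2 ^ n := by omega
        rw [ih (by omega) (v + 2 ^ m) hvm]
        have hmod : (v + 2 ^ m) % 2 ^ (m + 1) = 2 ^ m := by
          rw [Nat.add_mod, h1, Nat.zero_add, Nat.mod_mod_of_dvd _ dvd_rfl,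
            Nat.mod_eq_of_lt hpow]
        have e1 : xFun n k (v + 2 ^ m) = v + 2 ^ m := by
          unfold xFun
          rw [hmk, if_neg (by rw [hmod]; exact (Nat.two_pow_pos m).ne')]
        have e2 : xFun n (k + 1) v = v + 2 ^ m := by
          unfold xFun
          rw [← hmdef, if_pos h0, Nat.mod_eq_of_lt hvm]
        rw [e1, e2]
      · -- case (iii)
        have hr : v % 2 ^ (m + 1) = 2 ^ m := by
          have hrm : (v % 2 ^ (m + 1)) % 2 ^ m = 0 := by
            rw [Nat.mod_mod_of_dvd v (pow_dvd_pow 2 (Nat.le_succ m))]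
            exact h0
          obtain ⟨c, hc⟩ : 2 ^ m ∣ v % 2 ^ (m + 1) := Nat.dvd_of_mod_eq_zero hrm
          have hlt : 2 ^ m * c < 2 ^ (m + 1) := hc ▸ Nat.mod_lt _ (Nat.two_pow_pos _)
          rw [pow_succ] at hlt
          have hc2 : c < 2 := lt_of_mul_lt_mul_left hlt (Nat.zero_le _)
          have hc0 : c ≠ 0 := by
            rintro rfl
            rw [mul_zero] at hc
            exact h1 hc
          have hc1 : c = 1 := by omega
          rw [hc, hc1, mul_one]
        obtain ⟨hle, hsub⟩ := mod_sub_of_mod m v hr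
        rw [aPerm_sub n (k + 1) m hmdef.symm (by omega) hk v hr]
        rw [ih (by omega) (v - 2 ^ m) (by omega)]
        have e1 : xFun n k (v - 2 ^ m) = (v - 2 ^ m + 2 ^ (m + 1)) % 2 ^ n := by
          unfold xFun
          rw [hmk, if_pos hsub]
        have e2 : xFun n (k + 1) v = (v + 2 ^ m) % 2 ^ n := by
          unfold xFun
          rw [← hmdef, if_pos h0]
        rw [e1, e2]
        have hps : 2 ^ (m + 1) = 2 ^ m + 2 ^ m := by rw [pow_succ]; ring
        have heq : v - 2 ^ m + 2 ^ (m + 1) = v + 2 ^ m := by omega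
        rw [heq]
    · -- case (i)
      rw [aPerm_fix n (k + 1) m hmdef.symm v h0]
      have h1 : v % 2 ^ (m + 1) ≠ 0 := by
        intro hcon
        apply h0
        obtain ⟨c, hc⟩ := dvd_trans (pow_dvd_pow 2 (Nat.le_succ m))
          (Nat.dvd_of_mod_eq_zero hcon)
        rw [hc, Nat.mul_mod_right]
      rw [ih (by omega) v hv]
      have e1 : xFun n k v = v := by unfold xFun; rw [hmk, if_neg h1]
      have e2 : xFun n (k + 1) v = v := by unfold xFun; rw [← hmdef, if_neg h0]
      rw [e1, e2]
lemma X_apply (n v : ℕ) (hv : v < 2 ^ n) :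
    ((xEl n n : ↥(treeGroup n)) : Equiv.Perm (Leaf n)) (ofN n v) = ofN n ((v + 1) % 2 ^ n) := by
  rw [xEl_apply n n le_rfl v hv]
  unfold xFun
  rw [Nat.sub_self, pow_zero, Nat.mod_one, if_pos rfl]

lemma Y_apply (n : ℕ) (hn : 2 ≤ n) (v : ℕ) (hv : v < 2 ^ n) :
    ((xEl n (n - 2) : ↥(treeGroup n)) : Equiv.Perm (Leaf n)) (ofN n v)
      = ofN n (if v % 4 = 0 then (v + 4) % 2 ^ n else v) := by
  rw [xEl_apply n (n - 2) (by omega) v hv]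
  unfold xFun
  rw [show n - (n - 2) = 2 by omega]
  norm_num

lemma A_apply (n : ℕ) (hn : 2 ≤ n) (v : ℕ) (hv : v < 2 ^ n) :
    ((aEl n (n - 1) : ↥(treeGroup n)) : Equiv.Perm (Leaf n)) (ofN n v)
      = ofN n (if v % 4 = 0 then v + 2 else if v % 4 = 2 then v - 2 else v) := by
  rw [aEl_coe]
  have h1 : n - (n - 1) = 1 := by omega
  by_cases h0 : v % 4 = 0
  · rw [if_pos h0, aPerm_add n (n - 1) 1 h1 (by omega) (by omega) v (by norm_num [h0])]
    norm_num
  · rw [if_neg h0]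
    by_cases h2 : v % 4 = 2
    · rw [if_pos h2, aPerm_sub n (n - 1) 1 h1 (by omega) (by omega) v (by norm_num [h2])]
      norm_num
    · rw [if_neg h2]
      apply aPerm_fix n (n - 1) 1 h1
      rw [pow_one]
      omega
set_option linter.unusedVariables false in
lemma key2 (n : ℕ) (hn : 2 ≤ n) :
    xEl n n * (xEl n n * (xEl n n * (aEl n (n - 1) * (xEl n n * xEl n (n - 2)))))
      = xEl n (n - 2) * (xEl n (n - 2) * (aEl n (n - 1) *
          (xEl n n * (xEl n (n - 2) * xEl n n)))) := by
  apply Subtype.ext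
  apply Equiv.ext
  intro ℓ
  obtain ⟨v, hv, rfl⟩ := ofN_surjective n ℓ
  have hN : (4 : ℕ) ∣ 2 ^ n := by
    rw [show (4 : ℕ) = 2 ^ 2 by norm_num]
    exact pow_dvd_pow 2 hn
  have hN4 : 4 ≤ 2 ^ n := Nat.le_of_dvd (Nat.two_pow_pos n) hN
  obtain ⟨D, hD⟩ := hN
  have hNmod : 2 ^ n % 4 = 0 := by rw [hD, Nat.mul_mod_right]
  have hmod4 : ∀ w : ℕ, w % 2 ^ n % 4 = w % 4 := fun w =>
    Nat.mod_mod_of_dvd w ⟨D, hD⟩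
  have hpos := Nat.two_pow_pos n
  simp only [Subgroup.coe_mul, Equiv.Perm.mul_apply]
  rcases (by omega : v % 4 = 0 ∨ v % 4 = 1 ∨ v % 4 = 2 ∨ v % 4 = 3) with h4 | h4 | h4 | h4
  · -- v ≡ 0 [4]
    conv_lhs =>
      rw [Y_apply n hn v hv, if_pos h4, X_apply n _ (Nat.mod_lt _ hpos), Nat.mod_add_mod,
        A_apply n hn _ (Nat.mod_lt _ hpos),
        if_neg (by simp only [hmod4]; omega), if_neg (by simp only [hmod4]; omega),
        X_apply n _ (Nat.mod_lt _ hpos), Nat.mod_add_mod,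
        X_apply n _ (Nat.mod_lt _ hpos), Nat.mod_add_mod,
        X_apply n _ (Nat.mod_lt _ hpos), Nat.mod_add_mod]
    conv_rhs =>
      rw [X_apply n v hv, Nat.mod_eq_of_lt (by omega : v + 1 < 2 ^ n),
        Y_apply n hn _ (by omega : v + 1 < 2 ^ n), if_neg (by omega),
        X_apply n _ (by omega : v + 1 < 2 ^ n),
        Nat.mod_eq_of_lt (by omega : v + 1 + 1 < 2 ^ n),
        A_apply n hn _ (by omega : v + 1 + 1 < 2 ^ n), if_neg (by omega),
        if_pos (by omega), show v + 1 + 1 - 2 = v from by omega,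
        Y_apply n hn v hv, if_pos h4,
        Y_apply n hn _ (Nat.mod_lt _ hpos), if_pos (by simp only [hmod4]; omega),
        Nat.mod_add_mod]
  · -- v ≡ 1 [4]
    conv_lhs =>
      rw [Y_apply n hn v hv, if_neg (by omega),
        X_apply n v hv, Nat.mod_eq_of_lt (by omega : v + 1 < 2 ^ n),
        A_apply n hn _ (by omega : v + 1 < 2 ^ n), if_neg (by omega), if_pos (by omega),
        X_apply n _ (by omega : v + 1 - 2 < 2 ^ n),
        show v + 1 - 2 + 1 = v from by omega, Nat.mod_eq_of_lt hv,
        X_apply n v hv, Nat.mod_eq_of_lt (by omega : v + 1 < 2 ^ n),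
        X_apply n _ (by omega : v + 1 < 2 ^ n),
        Nat.mod_eq_of_lt (by omega : v + 1 + 1 < 2 ^ n)]
    conv_rhs =>
      rw [X_apply n v hv, Nat.mod_eq_of_lt (by omega : v + 1 < 2 ^ n),
        Y_apply n hn _ (by omega : v + 1 < 2 ^ n), if_neg (by omega),
        X_apply n _ (by omega : v + 1 < 2 ^ n),
        Nat.mod_eq_of_lt (by omega : v + 1 + 1 < 2 ^ n),
        A_apply n hn _ (by omega : v + 1 + 1 < 2 ^ n), if_neg (by omega),
        if_neg (by omega),
        Y_apply n hn _ (by omega : v + 1 + 1 < 2 ^ n), if_neg (by omega),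
        Y_apply n hn _ (by omega : v + 1 + 1 < 2 ^ n), if_neg (by omega)]
  · -- v ≡ 2 [4]
    have hw : (v + 1 + 1) % 2 ^ n < 2 ^ n := Nat.mod_lt _ hpos
    have hw4 : (v + 1 + 1) % 2 ^ n % 4 = 0 := by simp only [hmod4]; omega
    conv_lhs =>
      rw [Y_apply n hn v hv, if_neg (by omega),
        X_apply n v hv, Nat.mod_eq_of_lt (by omega : v + 1 < 2 ^ n),
        A_apply n hn _ (by omega : v + 1 < 2 ^ n), if_neg (by omega), if_neg (by omega),
        X_apply n _ (by omega : v + 1 < 2 ^ n),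
        X_apply n _ (Nat.mod_lt _ hpos), Nat.mod_add_mod,
        X_apply n _ (Nat.mod_lt _ hpos), Nat.mod_add_mod]
    have harg : (v + 1 + 1 + 1 + 1) % 2 ^ n = (v + 1 + 1) % 2 ^ n + 2 := by
      rcases (by omega : v + 2 = 2 ^ n ∨ v + 4 < 2 ^ n) with hc | hc
      · rw [show v + 1 + 1 + 1 + 1 = 2 ^ n + 2 from by omega, Nat.add_mod_left,
          show v + 1 + 1 = 2 ^ n from by omega, Nat.mod_self,
          Nat.mod_eq_of_lt (by omega : 2 < 2 ^ n)]
      · rw [Nat.mod_eq_of_lt (by omega : v + 1 + 1 + 1 + 1 < 2 ^ n),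
          Nat.mod_eq_of_lt (by omega : v + 1 + 1 < 2 ^ n)]
    rw [harg]
    conv_rhs =>
      rw [X_apply n v hv, Nat.mod_eq_of_lt (by omega : v + 1 < 2 ^ n),
        Y_apply n hn _ (by omega : v + 1 < 2 ^ n), if_neg (by omega),
        X_apply n _ (by omega : v + 1 < 2 ^ n),
        A_apply n hn _ hw, if_pos hw4,
        Y_apply n hn _ (by omega : (v + 1 + 1) % 2 ^ n + 2 < 2 ^ n),
        if_neg (by omega),
        Y_apply n hn _ (by omega : (v + 1 + 1) % 2 ^ n + 2 < 2 ^ n),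
        if_neg (by omega)]
  · -- v ≡ 3 [4]
    have hw : (v + 1) % 2 ^ n < 2 ^ n := Nat.mod_lt _ hpos
    have hw4 : (v + 1) % 2 ^ n % 4 = 0 := by simp only [hmod4]; omega
    conv_lhs =>
      rw [Y_apply n hn v hv, if_neg (by omega),
        X_apply n v hv,
        A_apply n hn _ hw, if_pos hw4,
        X_apply n _ (by omega : (v + 1) % 2 ^ n + 2 < 2 ^ n),
        X_apply n _ (Nat.mod_lt _ hpos), Nat.mod_add_mod,
        X_apply n _ (Nat.mod_lt _ hpos), Nat.mod_add_mod]
    conv_rhs =>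
      rw [X_apply n v hv,
        Y_apply n hn _ hw, if_pos hw4,
        X_apply n _ (Nat.mod_lt _ hpos), Nat.mod_add_mod,
        A_apply n hn _ (Nat.mod_lt _ hpos),
        if_neg (by simp only [hmod4]; omega), if_neg (by simp only [hmod4]; omega),
        Y_apply n hn _ (Nat.mod_lt _ hpos), if_neg (by simp only [hmod4]; omega),
        Y_apply n hn _ (Nat.mod_lt _ hpos), if_neg (by simp only [hmod4]; omega)]

open scoped commutatorElement

/-- in `W_n` (`n ≥ 2`), with `m_n = a_{n-1}(x_{n-2})^{x_n}`, one has
`x_n² = v_{n-4} · [x_n, m_n]⁻¹` where `v_{n-4} = x_{n-2}²` and `[x,y] = xyx⁻¹y⁻¹`;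
equivalently `x_n² [x_n, m_n] = x_{n-2}²`. -/
theorem xEl_sq_commutator (n : ℕ) (hn : 2 ≤ n) :
    (xEl n n) ^ 2 = (xEl n (n - 2)) ^ 2 * ⁅xEl n n, mEl n⁆⁻¹ ∧
    (xEl n n) ^ 2 * ⁅xEl n n, mEl n⁆ = (xEl n (n - 2)) ^ 2 := by
  have hm : mEl n = aEl n (n - 1) * (xEl n n * xEl n (n - 2) * (xEl n n)⁻¹) := rfl
  have key : (xEl n n) ^ 3 * mEl n = (xEl n (n - 2)) ^ 2 * (mEl n * xEl n n) := by
    rw [hm]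
    calc (xEl n n) ^ 3 * (aEl n (n - 1) * (xEl n n * xEl n (n - 2) * (xEl n n)⁻¹))
        = (xEl n n * (xEl n n * (xEl n n * (aEl n (n - 1) *
            (xEl n n * xEl n (n - 2)))))) * (xEl n n)⁻¹ := by
          rw [pow_succ, pow_succ, pow_one]; group
      _ = (xEl n (n - 2) * (xEl n (n - 2) * (aEl n (n - 1) *
            (xEl n n * (xEl n (n - 2) * xEl n n))))) * (xEl n n)⁻¹ := by rw [key2 n hn]
      _ = (xEl n (n - 2)) ^ 2 * (aEl n (n - 1) * (xEl n n * xEl n (n - 2) * (xEl n n)⁻¹)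
            * xEl n n) := by
          rw [pow_two]; group
  have h2 : (xEl n n) ^ 2 * ⁅xEl n n, mEl n⁆ = (xEl n (n - 2)) ^ 2 := by
    rw [commutatorElement_def]
    calc (xEl n n) ^ 2 * (xEl n n * mEl n * (xEl n n)⁻¹ * (mEl n)⁻¹)
        = ((xEl n n) ^ 3 * mEl n) * (xEl n n)⁻¹ * (mEl n)⁻¹ := by group
      _ = ((xEl n (n - 2)) ^ 2 * (mEl n * xEl n n)) * (xEl n n)⁻¹ * (mEl n)⁻¹ := by rw [key]
      _ = (xEl n (n - 2)) ^ 2 := by group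
  exact ⟨by rw [eq_mul_inv_iff_mul_eq]; exact h2, h2⟩
end

section
/- In $W_n$ for $n \geq 3$, with $m_n = a_{n-1}(x_{n-2})^{x_n}$, $M_n = \langle x_n, m_n, v_{n-3},\dots,v_0\rangle$, $V_n = \langle v_{n-3},\dots,v_0\rangle$, $U_n = V_n^{\langle x_n\rangle}$, and $N_n$ the normal closure of $\langle m_n, v_{n-3},\dots,v_0\rangle$ in $M_n$: the commutator subgroup $M_n'$ is contained in $N_n^{od} := N_n \cap \Phi(W_n)$. -/
/- ### Auxiliary lemmas -/

/-- Elements of the tree group have `2`-power order: `σ^(2^m)` fixes the first `m`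
coordinates of every leaf. -/
lemma treeGroup_pow_agree (n : ℕ) {σ : Equiv.Perm (Leaf n)} (hσ : σ ∈ treeGroup n) :
    ∀ m : ℕ, ∀ ℓ : Leaf n, ∀ t : Fin n, (t : ℕ) < m → (σ ^ (2 ^ m)) ℓ t = ℓ t := by
  intro m
  induction m with
  | zero => intro ℓ t ht; omega
  | succ m ih =>
    have hτ : σ ^ (2 ^ m) ∈ treeGroup n := pow_mem hσ _
    set τ := σ ^ (2 ^ m) with hτdef
    have hsq : σ ^ (2 ^ (m + 1)) = τ * τ := by
      rw [hτdef, pow_succ, pow_mul, pow_two]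
    intro ℓ t ht
    rw [hsq, Equiv.Perm.mul_apply]
    have hIH1 : ∀ s : Fin n, (s : ℕ) < m → τ (τ ℓ) s = τ ℓ s := fun s hs => ih (τ ℓ) s hs
    have hIH2 : ∀ s : Fin n, (s : ℕ) < m → τ ℓ s = ℓ s := fun s hs => ih ℓ s hs
    by_cases hc : (t : ℕ) < m
    · rw [hIH1 t hc, hIH2 t hc]
    · have htm : (t : ℕ) = m := by omega
      have H := (mem_treeGroup n τ).mp hτ (m + 1) (τ ℓ) ℓ
      by_cases hb : τ ℓ t = ℓ t
      · have hR : ∀ s : Fin n, (s : ℕ) < m + 1 → τ ℓ s = ℓ s := by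
          intro s hs
          by_cases hsm : (s : ℕ) < m
          · exact hIH2 s hsm
          · have : s = t := Fin.ext (by omega)
            rw [this]; exact hb
        rw [H.mpr hR t ht, hb]
      · have hL : ¬ (∀ s : Fin n, (s : ℕ) < m + 1 → τ (τ ℓ) s = τ ℓ s) := by
          intro hc2
          exact hb (H.mp hc2 t ht)
        push_neg at hL
        obtain ⟨s, hs, hne⟩ := hL
        have hst : s = t := by
          by_contra hne2
          have hsm : (s : ℕ) < m := by
            rcases Nat.lt_or_ge (s : ℕ) m with h | h
            · exact h
            · exact absurd (Fin.ext (by omega : (s : ℕ) = (t : ℕ))) hne2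
          exact hne (hIH1 s hsm)
        subst hst
        have h1 : τ (τ ℓ) s = !(τ ℓ s) := by
          cases h2 : τ (τ ℓ) s <;> cases h3 : τ ℓ s <;> simp_all
        have h2 : τ ℓ s = !(ℓ s) := by
          cases h4 : τ ℓ s <;> cases h5 : ℓ s <;> simp_all
        rw [h1, h2, Bool.not_not]

/-- `W_n` is a `2`-group. -/
lemma treeGroup_isPGroup (n : ℕ) : IsPGroup 2 ↥(treeGroup n) := by
  intro g
  refine ⟨n, ?_⟩
  apply Subtype.ext
  apply Equiv.ext
  intro ℓ
  have h1 : ((g ^ (2 ^ n) : ↥(treeGroup n)) : Equiv.Perm (Leaf n)) =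
      ((g : Equiv.Perm (Leaf n)) ^ (2 ^ n)) := by
    push_cast
    rfl
  simp only [h1, OneMemClass.coe_one, Equiv.Perm.one_apply]
  funext t
  exact treeGroup_pow_agree n g.2 n ℓ t t.isLt

open scoped commutatorElement

/-- In a group satisfying the normalizer condition, the commutator subgroup is contained
in the Frattini subgroup. -/
lemma commutator_le_frattini_of_nc {G : Type*} [Group G] (hnc : NormalizerCondition G) :
    commutator G ≤ frattini G := by
  rw [frattini, Order.radical]
  refine le_iInf fun H => le_iInf fun hH => ?_
  haveI : H.Normal := Subgroup.NormalizerCondition.normal_of_coatom (H := H) hnc hH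
  rw [commutator_def, Subgroup.commutator_le]
  intro g₁ _ g₂ _
  by_cases hS : ∀ q : G ⧸ H, q = 1
  · exact absurd ((Subgroup.eq_top_iff' H).mpr fun x => (QuotientGroup.eq_one_iff x).mp (hS x)) hH.1
  · push_neg at hS
    obtain ⟨q0, hq0⟩ := hS
    obtain ⟨g0, rfl⟩ := QuotientGroup.mk'_surjective H q0
    have key : ∀ K : Subgroup (G ⧸ H), K = ⊥ ∨ K = ⊤ := by
      intro K
      set L := K.comap (QuotientGroup.mk' H) with hL
      have hmapL : L.map (QuotientGroup.mk' H) = K :=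
        Subgroup.map_comap_eq_self_of_surjective (QuotientGroup.mk'_surjective H) K
      have hHL : H ≤ L := by
        intro x hx
        have : QuotientGroup.mk' H x = 1 := (QuotientGroup.eq_one_iff x).mpr hx
        simpa [hL, Subgroup.mem_comap, this] using one_mem K
      rcases eq_or_lt_of_le hHL with heq | hlt
      · left
        rw [← hmapL, ← heq]
        apply (Subgroup.map_eq_bot_iff _).mpr
        rw [QuotientGroup.ker_mk']
      · right
        rw [← hmapL, hH.2 L hlt]
        rw [Subgroup.map_top_of_surjective _ (QuotientGroup.mk'_surjective H)]
    have hgen : ∀ q : G ⧸ H, q ∈ Subgroup.zpowers (QuotientGroup.mk' H g0) := by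
      rcases key (Subgroup.zpowers (QuotientGroup.mk' H g0)) with hb | ht
      · exfalso
        have := Subgroup.mem_zpowers (QuotientGroup.mk' H g0)
        rw [hb, Subgroup.mem_bot] at this
        exact hq0 this
      · intro q; rw [ht]; exact Subgroup.mem_top q
    obtain ⟨a, ha⟩ := hgen (QuotientGroup.mk' H g₁)
    obtain ⟨b, hb⟩ := hgen (QuotientGroup.mk' H g₂)
    have hcomm : Commute (QuotientGroup.mk' H g₁) (QuotientGroup.mk' H g₂) := by
      rw [← ha, ← hb]
      exact Commute.zpow_zpow (Commute.refl _) a b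
    have hone : QuotientGroup.mk' H ⁅g₁, g₂⁆ = 1 := by
      rw [map_commutatorElement]
      exact commutatorElement_eq_one_iff_commute.mpr hcomm
    exact (QuotientGroup.eq_one_iff _).mp hone

lemma xEl_mem_MgrpB (n : ℕ) : xEl n n ∈ MgrpB n :=
  Subgroup.subset_closure (Set.mem_insert _ _)

lemma mem_NgrpB_of_gen {n : ℕ} {h : ↥(treeGroup n)} (hh : h ∈ insert (mEl n) (VsetK n n)) :
    h ∈ NgrpB n :=
  Subgroup.subset_closure ⟨1, one_mem _, h, hh, by group⟩

lemma conj_mem_NgrpB {n : ℕ} {m g : ↥(treeGroup n)} (hm : m ∈ MgrpB n) (hg : g ∈ NgrpB n) :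
    m * g * m⁻¹ ∈ NgrpB n := by
  unfold NgrpB at hg
  induction hg using Subgroup.closure_induction with
  | mem x hx =>
    obtain ⟨m₀, hm₀, v, hv, rfl⟩ := hx
    have heq : m * (m₀ * v * m₀⁻¹) * m⁻¹ = (m * m₀) * v * (m * m₀)⁻¹ := by group
    rw [heq]
    exact Subgroup.subset_closure ⟨m * m₀, mul_mem hm hm₀, v, hv, rfl⟩
  | one => simpa using one_mem (NgrpB n)
  | mul x y hx hy ihx ihy =>
    have heq : m * (x * y) * m⁻¹ = (m * x * m⁻¹) * (m * y * m⁻¹) := by group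
    rw [heq]; exact mul_mem ihx ihy
  | inv x hx ihx =>
    have heq : m * x⁻¹ * m⁻¹ = (m * x * m⁻¹)⁻¹ := by group
    rw [heq]; exact inv_mem ihx

instance NgrpB_subgroupOf_normal (n : ℕ) : ((NgrpB n).subgroupOf (MgrpB n)).Normal := by
  constructor
  intro p hp m
  rw [Subgroup.mem_subgroupOf] at hp ⊢
  simpa using conj_mem_NgrpB m.2 hp

lemma mem_zpowers_quot (n : ℕ) (g : ↥(treeGroup n)) (hg : g ∈ MgrpB n) :
    (QuotientGroup.mk' ((NgrpB n).subgroupOf (MgrpB n)) ⟨g, hg⟩)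
      ∈ Subgroup.zpowers
        (QuotientGroup.mk' ((NgrpB n).subgroupOf (MgrpB n)) ⟨xEl n n, xEl_mem_MgrpB n⟩) := by
  unfold MgrpB at hg
  induction hg using Subgroup.closure_induction with
  | mem x hx =>
    rcases hx with rfl | hx
    · exact Subgroup.mem_zpowers _
    · have hxN : x ∈ NgrpB n := mem_NgrpB_of_gen hx
      have hone : QuotientGroup.mk' ((NgrpB n).subgroupOf (MgrpB n))
          ⟨x, Subgroup.subset_closure (Set.mem_insert_of_mem _ hx)⟩ = 1 :=
        (QuotientGroup.eq_one_iff _).mpr (Subgroup.mem_subgroupOf.mpr hxN)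
      rw [hone]
      exact one_mem _
  | one =>
    have h1 : (⟨(1 : ↥(treeGroup n)), one_mem _⟩ : ↥(MgrpB n)) = 1 := rfl
    rw [h1, map_one]
    exact one_mem _
  | mul x y hx hy ihx ihy =>
    have h1 : (⟨x * y, mul_mem hx hy⟩ : ↥(MgrpB n)) = ⟨x, hx⟩ * ⟨y, hy⟩ := rfl
    rw [h1, map_mul]
    exact mul_mem ihx ihy
  | inv x hx ihx =>
    have h1 : (⟨x⁻¹, inv_mem hx⟩ : ↥(MgrpB n)) = (⟨x, hx⟩ : ↥(MgrpB n))⁻¹ := rfl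
    rw [h1, map_inv]
    exact inv_mem ihx

lemma commutator_MgrpB_le_NgrpB (n : ℕ) : ⁅MgrpB n, MgrpB n⁆ ≤ NgrpB n := by
  rw [Subgroup.commutator_le]
  intro g hg h hh
  obtain ⟨a, ha⟩ := mem_zpowers_quot n g hg
  obtain ⟨b, hb⟩ := mem_zpowers_quot n h hh
  have hcomm : Commute (QuotientGroup.mk' ((NgrpB n).subgroupOf (MgrpB n)) ⟨g, hg⟩)
      (QuotientGroup.mk' ((NgrpB n).subgroupOf (MgrpB n)) ⟨h, hh⟩) := by
    rw [← ha, ← hb]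
    exact Commute.zpow_zpow (Commute.refl _) a b
  have hone : QuotientGroup.mk' ((NgrpB n).subgroupOf (MgrpB n))
      ⁅(⟨g, hg⟩ : ↥(MgrpB n)), ⟨h, hh⟩⁆ = 1 := by
    rw [map_commutatorElement]
    exact commutatorElement_eq_one_iff_commute.mpr hcomm
  have hmem := Subgroup.mem_subgroupOf.mp ((QuotientGroup.eq_one_iff _).mp hone)
  simpa [commutatorElement_def] using hmem

/-- for `n ≥ 3`, with `M_n = ⟨x_n, m_n, v_{n-3}, …, v_0⟩` and `N_n` the
normal closure of `⟨m_n, v_{n-3}, …, v_0⟩` in `M_n`, the commutator subgroup `M_n'` is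
contained in `N_n^od = N_n ∩ Φ(W_n)`. -/
theorem commutator_le_Nod (n : ℕ) (hn : 3 ≤ n) :
    ⁅MgrpB n, MgrpB n⁆ ≤ NgrpB n ⊓ frattini ↥(treeGroup n) := by
  refine le_inf (commutator_MgrpB_le_NgrpB n) ?_
  haveI : Fact (Nat.Prime 2) := ⟨Nat.prime_two⟩
  haveI hnil : Group.IsNilpotent ↥(treeGroup n) := (treeGroup_isPGroup n).isNilpotent
  calc ⁅MgrpB n, MgrpB n⁆ ≤ ⁅(⊤ : Subgroup ↥(treeGroup n)), ⊤⁆ :=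
        Subgroup.commutator_mono le_top le_top
    _ ≤ frattini ↥(treeGroup n) :=
        commutator_le_frattini_of_nc normalizerCondition_of_isNilpotent
end
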